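/- arXiv:2210.12036 — 2 statements merged into one kernel-verified Lean document; each statement's English description precedes it below -/
import Mathlib

section
/- Fix a point set P of 2n points in general position and an integer k ≥ 1. The number of distinct flips f = [p1p3, p2p4 → p1p4, p2p3] on P whose line-potential drop Φ_L-drop is less than k is at most C·n²·k² for an absolute constant C. More precisely, for any fixed directed final segment p1p4, there are at most 2k choices for p3 such that some flip with final segment p1p4 and removed segment p1p3 has potential drop < k. -/
open scoped Classical

noncomputable section

/-- The plane. -/
abbrev Pl := ℝ × ℝ
/-- A segment, as an ordered pair of endpoints. -/
abbrev Seg := Pl × Pl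

/-- The set of points of a segment. -/
def segSet (s : Seg) : Set Pl := segment ℝ s.1 s.2

/-- Two segments cross: they intersect in exactly one point which is
not an endpoint of either. -/
def Cross (s t : Seg) : Prop :=
  ∃ x : Pl, segSet s ∩ segSet t = {x} ∧ x ≠ s.1 ∧ x ≠ s.2 ∧ x ≠ t.1 ∧ x ≠ t.2

/-- The line through two points. -/
def lineThrough (p q : Pl) : Set Pl := {x | Collinear ℝ ({p, q, x} : Set Pl)}

/-- A line crosses a segment: they intersect in exactly one point which is
not an endpoint of the segment. -/
def LineCross (l : Set Pl) (s : Seg) : Prop :=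
  ∃ x : Pl, l ∩ segSet s = {x} ∧ x ≠ s.1 ∧ x ≠ s.2

/-- Signed side of the line through `a` and `b` on which `x` lies. -/
def sideVal (a b x : Pl) : ℝ :=
  (b.1 - a.1) * (x.2 - a.2) - (b.2 - a.2) * (x.1 - a.1)

/-- General position: no three (distinct) points of `S` are collinear. -/
def GenPos (S : Set Pl) : Prop :=
  ∀ a ∈ S, ∀ b ∈ S, ∀ c ∈ S, a ≠ b → a ≠ c → b ≠ c → ¬ Collinear ℝ ({a, b, c} : Set Pl)

/-- Strictly convex position. -/
def ConvexPos (S : Set Pl) : Prop := ∀ p ∈ S, p ∉ convexHull ℝ (S \ {p})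

/-- A set of segments is a matching: no degenerate segment and all endpoints distinct. -/
def IsMatching (M : Finset Seg) : Prop :=
  (∀ s ∈ M, s.1 ≠ s.2) ∧
  ∀ s ∈ M, ∀ t ∈ M, s ≠ t → ({s.1, s.2} : Set Pl) ∩ {t.1, t.2} = ∅

/-- A perfect matching on the point set `P`. -/
def IsPM (P : Finset Pl) (M : Finset Seg) : Prop :=
  IsMatching M ∧ (∀ s ∈ M, s.1 ∈ P ∧ s.2 ∈ P) ∧
  ∀ p ∈ P, ∃ s ∈ M, p = s.1 ∨ p = s.2

/-- Number of (unordered) crossing pairs of segments of `M`. -/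
def phiX (M : Finset Seg) : ℕ :=
  Set.ncard {z : Sym2 Seg | ∃ u t : Seg, z = s(u, t) ∧ u ∈ M ∧ t ∈ M ∧ Cross u t}

/-- Number of segments of `M` crossed by the line `l`. -/
def phiLine (l : Set Pl) (M : Finset Seg) : ℕ :=
  Set.ncard {s : Seg | s ∈ M ∧ LineCross l s}

/-- All lines through two points of `P`. -/
def linesOf (P : Finset Pl) : Set (Set Pl) :=
  {l | ∃ p ∈ P, ∃ q ∈ P, p ≠ q ∧ l = lineThrough p q}

/-- The line potential with respect to a set of lines `L`. -/
def phiL (L : Set (Set Pl)) (M : Finset Seg) : ℕ := ∑ᶠ l ∈ L, phiLine l M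

/-- A flip in the matching version: replace a crossing pair by one of the two
non-crossing pairs on the same four endpoints. -/
def IsFlip (M M' : Finset Seg) : Prop :=
  ∃ p1 p2 p3 p4 : Pl,
    Cross (p1, p3) (p2, p4) ∧ (p1, p3) ∈ M ∧ (p2, p4) ∈ M ∧
    ((¬ Cross (p1, p4) (p2, p3) ∧ M' = (M \ {(p1, p3), (p2, p4)}) ∪ {(p1, p4), (p2, p3)}) ∨
     (¬ Cross (p1, p2) (p3, p4) ∧ M' = (M \ {(p1, p3), (p2, p4)}) ∪ {(p1, p2), (p3, p4)}))

/-- `t1, t2` reconnect the four endpoints of `s1, s2` forming a 4-cycle. -/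
def Rewires (s1 s2 t1 t2 : Seg) : Prop :=
  ∃ a b c d : Pl, ({s1.1, s1.2} : Set Pl) = {a, b} ∧ ({s2.1, s2.2} : Set Pl) = {c, d} ∧
    ((({t1.1, t1.2} : Set Pl) = {a, c} ∧ ({t2.1, t2.2} : Set Pl) = {b, d}) ∨
     (({t1.1, t1.2} : Set Pl) = {a, d} ∧ ({t2.1, t2.2} : Set Pl) = {b, c}))

/-- A flip in the multigraph (multiset) version. -/
def IsFlipMS (M M' : Multiset Seg) : Prop :=
  ∃ p1 p2 p3 p4 : Pl, Cross (p1, p3) (p2, p4) ∧ (p1, p3) ∈ M ∧ (p2, p4) ∈ M ∧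
    ∃ t1 t2 : Seg, Rewires (p1, p3) (p2, p4) t1 t2 ∧ ¬ Cross t1 t2 ∧
      M' = t1 ::ₘ t2 ::ₘ ((M.erase (p1, p3)).erase (p2, p4))

/-- A red-blue perfect matching: first coordinates red, second coordinates blue. -/
def IsRBPM (R B : Finset Pl) (M : Finset Seg) : Prop :=
  IsMatching M ∧ (∀ s ∈ M, s.1 ∈ R ∧ s.2 ∈ B) ∧
  (∀ p ∈ R, ∃ s ∈ M, p = s.1) ∧ (∀ p ∈ B, ∃ s ∈ M, p = s.2)

/-- A flip in the red-blue matching version (the replacement pair is forced). -/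
def IsRBFlip (M M' : Finset Seg) : Prop :=
  ∃ r1 b1 r2 b2 : Pl, Cross (r1, b1) (r2, b2) ∧ (r1, b1) ∈ M ∧ (r2, b2) ∈ M ∧
    ¬ Cross (r1, b2) (r2, b1) ∧ M' = (M \ {(r1, b1), (r2, b2)}) ∪ {(r1, b2), (r2, b1)}

/-- `T` is (the edge set of) a tour on `N` points. -/
def IsTour (T : Finset Seg) (N : ℕ) : Prop :=
  3 ≤ N ∧ ∃ v : Fin N → Pl, Function.Injective v ∧
    T = Finset.image (fun i : Fin N => (v i, v (finRotate N i))) Finset.univ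

/-- A flip in the TSP version: remove two crossing tour edges and reconnect the
four endpoints. -/
def IsTSPFlip (T T' : Finset Seg) : Prop :=
  ∃ s1 s2 t1 t2 : Seg, Cross s1 s2 ∧ s1 ∈ T ∧ s2 ∈ T ∧ Rewires s1 s2 t1 t2 ∧
    T' = (T \ {s1, s2}) ∪ {t1, t2}

/-- `a` and `b` are consecutive points on the convex-hull boundary of `Q`. -/
def HullEdge (Q : Finset Pl) (a b : Pl) : Prop :=
  a ∈ Q ∧ b ∈ Q ∧ a ≠ b ∧
  ((∀ c ∈ Q, c ≠ a → c ≠ b → 0 < sideVal a b c) ∨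
   (∀ c ∈ Q, c ≠ a → c ≠ b → sideVal a b c < 0))

/-- The line-potential drop of a flip, independent of the ambient matching. -/
def flipDrop (P : Finset Pl) (p1 p2 p3 p4 : Pl) : ℤ :=
  ∑ᶠ l ∈ linesOf P,
    ((phiLine l {(p1, p3), (p2, p4)} : ℤ) - (phiLine l {(p1, p4), (p2, p3)} : ℤ))

lemma collinear_iff' {r s : Pl} (x : Pl) (h : r ≠ s) :
    Collinear ℝ ({r, s, x} : Set Pl) ↔ sideVal r s x = 0 := by
  rw [collinear_iff_of_mem (show r ∈ ({r,s,x} : Set Pl) by simp)]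
  constructor
  · rintro ⟨v, hv⟩
    obtain ⟨cs, hcs⟩ := hv s (by simp)
    obtain ⟨cx, hcx⟩ := hv x (by simp)
    have h1 : s.1 - r.1 = cs * v.1 ∧ s.2 - r.2 = cs * v.2 := by
      constructor <;> [have := congrArg Prod.fst hcs; have := congrArg Prod.snd hcs] <;>
        simp [Prod.smul_def] at this ⊢ <;> linarith [this]
    have h2 : x.1 - r.1 = cx * v.1 ∧ x.2 - r.2 = cx * v.2 := by
      constructor <;> [have := congrArg Prod.fst hcx; have := congrArg Prod.snd hcx] <;>
        simp [Prod.smul_def] at this ⊢ <;> linarith [this]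
    simp only [sideVal]
    rw [h1.1, h1.2, h2.1, h2.2]; ring
  · intro hsv
    refine ⟨s - r, ?_⟩
    intro p hp
    simp only [Set.mem_insert_iff, Set.mem_singleton_iff] at hp
    rcases hp with rfl | rfl | rfl
    · exact ⟨0, by simp⟩
    · exact ⟨1, by simp⟩
    · have hne : s.1 - r.1 ≠ 0 ∨ s.2 - r.2 ≠ 0 := by
        by_contra hc
        push_neg at hc
        apply h
        have : s.1 = r.1 := by linarith [hc.1]
        have : s.2 = r.2 := by linarith [hc.2]
        exact (Prod.ext_iff.2 ⟨by linarith [hc.1], by linarith [hc.2]⟩).symm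
      simp only [sideVal] at hsv
      rcases hne with h1 | h2
      · refine ⟨(p.1 - r.1)/(s.1 - r.1), ?_⟩
        have e2 : p.2 - r.2 = (p.1 - r.1)/(s.1 - r.1) * (s.2 - r.2) := by
          field_simp; nlinarith [hsv]
        have e1 : p.1 - r.1 = (p.1 - r.1)/(s.1 - r.1) * (s.1 - r.1) := by field_simp
        ext <;> simp [Prod.smul_def] <;> linarith
      · refine ⟨(p.2 - r.2)/(s.2 - r.2), ?_⟩
        have e1 : p.1 - r.1 = (p.2 - r.2)/(s.2 - r.2) * (s.1 - r.1) := by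
          field_simp; nlinarith [hsv]
        have e2 : p.2 - r.2 = (p.2 - r.2)/(s.2 - r.2) * (s.2 - r.2) := by field_simp
        ext <;> simp [Prod.smul_def] <;> linarith

lemma lineThrough_eq {r s : Pl} (h : r ≠ s) :
    lineThrough r s = {z : Pl | sideVal r s z = 0} := by
  ext z; exact collinear_iff' z h

section
variable {r s a b : Pl}

lemma sideVal_affine (r s a b : Pl) (t : ℝ) :
    sideVal r s ((1-t)•a + t•b) = (1-t) * sideVal r s a + t * sideVal r s b := by
  simp only [sideVal, Prod.smul_def, Prod.fst_add, Prod.snd_add, smul_eq_mul, Prod.smul_fst,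
    Prod.smul_snd]
  ring

lemma mem_segSet_iff {a b x : Pl} :
    x ∈ segSet (a, b) ↔ ∃ t : ℝ, 0 ≤ t ∧ t ≤ 1 ∧ x = (1-t)•a + t•b := by
  rw [segSet, segment_eq_image]
  constructor
  · rintro ⟨t, ⟨h0, h1⟩, rfl⟩; exact ⟨t, h0, h1, rfl⟩
  · rintro ⟨t, h0, h1, rfl⟩; exact ⟨t, ⟨h0, h1⟩, rfl⟩

lemma LC_iff (r s : Pl) (a b : Pl) :
    LineCross {z : Pl | sideVal r s z = 0} (a, b) ↔ sideVal r s a * sideVal r s b < 0 := by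
  set f := sideVal r s with hf
  constructor
  · rintro ⟨x, hx, hxa, hxb⟩
    have hxm : x ∈ ({z : Pl | f z = 0} : Set Pl) ∩ segSet (a, b) := hx ▸ rfl
    obtain ⟨hx0, hxs⟩ := hxm
    obtain ⟨t, ht0, ht1, rfl⟩ := mem_segSet_iff.1 hxs
    have hfx : (1-t) * f a + t * f b = 0 := by
      rw [← sideVal_affine]; exact hx0
    have hab : a ≠ b := by
      rintro rfl
      apply hxa
      ext <;> simp [Prod.smul_def] <;> ring
    have ht0' : t ≠ 0 := by
      rintro rfl; apply hxa; ext <;> simp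
    have ht1' : t ≠ 1 := by
      rintro rfl; apply hxb; ext <;> simp
    have ht0'' : 0 < t := lt_of_le_of_ne ht0 (Ne.symm ht0')
    have ht1'' : t < 1 := lt_of_le_of_ne ht1 ht1'
    rcases lt_trichotomy (f a) 0 with ha | ha | ha
    · rcases lt_trichotomy (f b) 0 with hb | hb | hb
      · nlinarith
      · exfalso
        -- f b = 0: b ∈ l ∩ seg = {x}, so b = x, contra
        apply hxb
        have : b ∈ ({z : Pl | f z = 0} : Set Pl) ∩ segSet (a, b) :=
          ⟨hb, right_mem_segment ℝ a b⟩
        rw [hx] at this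
        exact this.symm
      · nlinarith
    · exfalso
      apply hxa
      have : a ∈ ({z : Pl | f z = 0} : Set Pl) ∩ segSet (a, b) :=
        ⟨ha, left_mem_segment ℝ a b⟩
      rw [hx] at this
      exact this.symm
    · rcases lt_trichotomy (f b) 0 with hb | hb | hb
      · nlinarith
      · exfalso
        apply hxb
        have : b ∈ ({z : Pl | f z = 0} : Set Pl) ∩ segSet (a, b) :=
          ⟨hb, right_mem_segment ℝ a b⟩
        rw [hx] at this
        exact this.symm
      · nlinarith
  · intro hprod
    have hfa : f a ≠ 0 := fun h => by rw [h] at hprod; simp at hprod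
    have hfb : f b ≠ 0 := fun h => by rw [h] at hprod; simp at hprod
    have hne : f a - f b ≠ 0 := by
      rcases lt_or_gt_of_ne hfa with h | h <;> nlinarith
    set t := f a / (f a - f b) with htdef
    have ht0 : 0 < t := by
      rcases lt_or_gt_of_ne hfa with h | h
      · have hb : 0 < f b := by nlinarith
        apply div_pos_of_neg_of_neg h; linarith
      · have hb : f b < 0 := by nlinarith
        apply div_pos h; linarith
    have ht1 : t < 1 := by
      rw [htdef, div_lt_one_iff]
      rcases lt_or_gt_of_ne hfa with h | h
      · have hb : 0 < f b := by nlinarith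
        right; right; constructor <;> linarith
      · have hb : f b < 0 := by nlinarith
        left; constructor <;> linarith
    have hab : a ≠ b := by rintro rfl; nlinarith
    set x := (1-t)•a + t•b with hxdef
    have hfx : f x = 0 := by
      rw [hxdef]
      show sideVal r s ((1-t)•a + t•b) = 0
      rw [sideVal_affine, htdef]
      field_simp
      ring
    refine ⟨x, ?_, ?_, ?_⟩
    · ext z
      simp only [Set.mem_inter_iff, Set.mem_setOf_eq, Set.mem_singleton_iff]
      constructor
      · rintro ⟨hz0, hzs⟩
        obtain ⟨u, hu0, hu1, rfl⟩ := mem_segSet_iff.1 hzs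
        have : (1-u) * f a + u * f b = 0 := by rw [← sideVal_affine]; exact hz0
        have hu : u = t := by
          rw [htdef]; field_simp; linarith
        rw [hu]
      · rintro rfl
        exact ⟨hfx, mem_segSet_iff.2 ⟨t, le_of_lt ht0, le_of_lt ht1, rfl⟩⟩
    · intro hxa
      have : x - a = t • (b - a) := by
        rw [hxdef]; ext <;> simp [Prod.smul_def] <;> ring
      rw [hxa] at this
      simp only [sub_self] at this
      have hba : b - a ≠ 0 := sub_ne_zero.2 (Ne.symm hab)
      have := (smul_eq_zero.1 this.symm).resolve_left (ne_of_gt ht0)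
      exact hba this
    · intro hxb
      have : x - b = (1-t) • (a - b) := by
        rw [hxdef]; ext <;> simp [Prod.smul_def] <;> ring
      rw [hxb] at this
      simp only [sub_self] at this
      have hba : a - b ≠ 0 := sub_ne_zero.2 hab
      have := (smul_eq_zero.1 this.symm).resolve_left (by intro h; linarith)
      exact hba this
lemma cross_distinct {a b c d : Pl} (h : Cross (a,b) (c,d)) :
    a ≠ b ∧ c ≠ d ∧ a ≠ c ∧ a ≠ d ∧ b ≠ c ∧ b ≠ d := by
  obtain ⟨x, hx, h1, h2, h3, h4⟩ := h
  have hmem : ∀ p : Pl, p ∈ segSet (a,b) → p ∈ segSet (c,d) → p = x := by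
    intro p hp hq
    have : p ∈ segSet (a,b) ∩ segSet (c,d) := ⟨hp, hq⟩
    rwa [hx] at this
  have la : a ∈ segSet (a,b) := left_mem_segment ℝ a b
  have lb : b ∈ segSet (a,b) := right_mem_segment ℝ a b
  have lc : c ∈ segSet (c,d) := left_mem_segment ℝ c d
  have ld : d ∈ segSet (c,d) := right_mem_segment ℝ c d
  refine ⟨?_, ?_, ?_, ?_, ?_, ?_⟩
  · rintro rfl
    have hxa : x ∈ segSet (a,a) ∩ segSet (c,d) := by rw [hx]; rfl
    have := hxa.1
    simp only [segSet, segment_same] at this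
    exact h1 this
  · rintro rfl
    have hxc : x ∈ segSet (a,b) ∩ segSet (c,c) := by rw [hx]; rfl
    have := hxc.2
    simp only [segSet, segment_same] at this
    exact h3 this
  · rintro rfl; exact h1 (hmem a la lc).symm
  · rintro rfl; exact h1 (hmem a la ld).symm
  · rintro rfl; exact h2 (hmem b lb lc).symm
  · rintro rfl; exact h2 (hmem b lb ld).symm

lemma cross_param {p1 p2 p3 p4 : Pl} (h : Cross (p1,p3) (p2,p4)) :
    ∃ t s : ℝ, 0 < t ∧ t < 1 ∧ 0 < s ∧ s < 1 ∧
      (1-t)•p1 + t•p3 = (1-s)•p2 + s•p4 := by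
  obtain ⟨x, hx, h1, h2, h3, h4⟩ := h
  have hxm : x ∈ segSet (p1,p3) ∩ segSet (p2,p4) := by rw [hx]; rfl
  obtain ⟨t, ht0, ht1, hxt⟩ := mem_segSet_iff.1 hxm.1
  obtain ⟨s, hs0, hs1, hxs⟩ := mem_segSet_iff.1 hxm.2
  have ht0' : t ≠ 0 := by rintro rfl; apply h1; rw [hxt]; ext <;> simp
  have ht1' : t ≠ 1 := by rintro rfl; apply h2; rw [hxt]; ext <;> simp
  have hs0' : s ≠ 0 := by rintro rfl; apply h3; rw [hxs]; ext <;> simp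
  have hs1' : s ≠ 1 := by rintro rfl; apply h4; rw [hxs]; ext <;> simp
  exact ⟨t, s, lt_of_le_of_ne ht0 (Ne.symm ht0'), lt_of_le_of_ne ht1 ht1',
    lt_of_le_of_ne hs0 (Ne.symm hs0'), lt_of_le_of_ne hs1 hs1', hxt.symm.trans hxs⟩

lemma phiLine_pair (l : Set Pl) {s t : Seg} (hst : s ≠ t) :
    phiLine l {s, t} =
      (if LineCross l s then 1 else 0) + (if LineCross l t then 1 else 0) := by
  have hset : {u : Seg | u ∈ ({s, t} : Finset Seg) ∧ LineCross l u} =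
      ↑(({s, t} : Finset Seg).filter (fun u => LineCross l u)) := by
    ext u; simp [Finset.mem_filter]
  rw [phiLine, hset, Set.ncard_coe_finset, Finset.filter_insert, Finset.filter_singleton]
  split_ifs with h1 h2 h2
  · rw [Finset.card_insert_of_notMem (by simp [hst]), Finset.card_singleton]
  · simp
  · simp
  · simp

section Signs
variable {F1 F2 F3 F4 t s : ℝ}

lemma sign_B (ht0 : 0 < t) (ht1 : t < 1) (hs0 : 0 < s) (hs1 : s < 1)
    (E : (1-t) * F1 + t * F3 = (1-s) * F2 + s * F4)
    (h14 : F1*F4 < 0) (h13 : ¬ F1*F3 < 0) : F2*F4 < 0 := by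
  push_neg at h13
  rcases lt_trichotomy F1 0 with c1 | c1 | c1
  · have hF4 : 0 < F4 := by nlinarith
    have hF3 : F3 ≤ 0 := by nlinarith
    have hL : (1-t) * F1 + t * F3 < 0 := by nlinarith
    have hF2 : F2 < 0 := by nlinarith
    nlinarith
  · rw [c1] at h14; nlinarith
  · have hF4 : F4 < 0 := by nlinarith
    have hF3 : 0 ≤ F3 := by nlinarith
    have hL : 0 < (1-t) * F1 + t * F3 := by nlinarith
    have hF2 : 0 < F2 := by nlinarith
    nlinarith

lemma sign_C (ht0 : 0 < t) (ht1 : t < 1) (hs0 : 0 < s) (hs1 : s < 1)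
    (E : (1-t) * F1 + t * F3 = (1-s) * F2 + s * F4)
    (h23 : F2*F3 < 0) (h13 : ¬ F1*F3 < 0) : F2*F4 < 0 := by
  push_neg at h13
  rcases lt_trichotomy F3 0 with c3 | c3 | c3
  · have hF2 : 0 < F2 := by nlinarith
    have hF1 : F1 ≤ 0 := by nlinarith
    have hL : (1-t) * F1 + t * F3 < 0 := by nlinarith
    have hF4 : F4 < 0 := by nlinarith
    nlinarith
  · rw [c3] at h23; nlinarith
  · have hF2 : F2 < 0 := by nlinarith
    have hF1 : 0 ≤ F1 := by nlinarith
    have hL : 0 < (1-t) * F1 + t * F3 := by nlinarith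
    have hF4 : 0 < F4 := by nlinarith
    nlinarith

lemma sign_A (ht0 : 0 < t) (ht1 : t < 1) (hs0 : 0 < s) (hs1 : s < 1)
    (E : (1-t) * F1 + t * F3 = (1-s) * F2 + s * F4)
    (h14 : F1*F4 < 0) (h23 : F2*F3 < 0) : F1*F3 < 0 := by
  by_contra h13
  push_neg at h13
  rcases lt_trichotomy F1 0 with c1 | c1 | c1
  · have hF4 : 0 < F4 := by nlinarith
    have hF3 : F3 ≤ 0 := by nlinarith
    have hL : (1-t) * F1 + t * F3 < 0 := by nlinarith
    have hF2 : F2 < 0 := by nlinarith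
    have hF3' : 0 < F3 := by nlinarith
    linarith
  · rw [c1] at h14; nlinarith
  · have hF4 : F4 < 0 := by nlinarith
    have hF3 : 0 ≤ F3 := by nlinarith
    have hL : 0 < (1-t) * F1 + t * F3 := by nlinarith
    have hF2 : 0 < F2 := by nlinarith
    have hF3' : F3 < 0 := by nlinarith
    linarith

lemma sign_D (h14 : F1*F4 < 0) (h23 : F2*F3 < 0) (h13 : F1*F3 < 0) : F2*F4 < 0 := by
  rcases lt_trichotomy F3 0 with c3 | c3 | c3
  · have hF1 : 0 < F1 := by nlinarith
    have hF4 : F4 < 0 := by nlinarith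
    have hF2 : 0 < F2 := by nlinarith
    nlinarith
  · rw [c3] at h13; nlinarith
  · have hF1 : F1 < 0 := by nlinarith
    have hF4 : 0 < F4 := by nlinarith
    have hF2 : F2 < 0 := by nlinarith
    nlinarith

lemma ind_ineq (ht0 : 0 < t) (ht1 : t < 1) (hs0 : 0 < s) (hs1 : s < 1)
    (E : (1-t) * F1 + t * F3 = (1-s) * F2 + s * F4) :
    ((if F1*F4 < 0 then 1 else 0) + (if F2*F3 < 0 then 1 else 0) : ℤ) ≤
      (if F1*F3 < 0 then 1 else 0) + (if F2*F4 < 0 then 1 else 0) := by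
  by_cases h14 : F1*F4 < 0 <;> by_cases h23 : F2*F3 < 0 <;>
    by_cases h13 : F1*F3 < 0 <;> by_cases h24 : F2*F4 < 0 <;>
    simp only [if_pos, if_neg, *] <;> norm_num
  · exact absurd (sign_D h14 h23 h13) h24
  · exact absurd (sign_A ht0 ht1 hs0 hs1 E h14 h23) h13
  · exact absurd (sign_A ht0 ht1 hs0 hs1 E h14 h23) h13
  · exact absurd (sign_B ht0 ht1 hs0 hs1 E h14 h13) h24
  · exact absurd (sign_C ht0 ht1 hs0 hs1 E h23 h13) h24
end Signs

lemma seg_ne_seg' {p1 p2 p3 p4 : Pl} (hC : Cross (p1,p3) (p2,p4)) :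
    ((p1,p3) : Seg) ≠ (p2,p4) ∧ ((p1,p4) : Seg) ≠ (p2,p3) := by
  obtain ⟨-, -, h12, -, -, -⟩ := cross_distinct hC
  exact ⟨fun h => h12 (congrArg Prod.fst h), fun h => h12 (congrArg Prod.fst h)⟩

lemma sideVal_E {p1 p2 p3 p4 r s : Pl} {t u : ℝ}
    (hE : (1-t)•p1 + t•p3 = (1-u)•p2 + u•p4) :
    (1-t) * sideVal r s p1 + t * sideVal r s p3
      = (1-u) * sideVal r s p2 + u * sideVal r s p4 := by
  rw [← sideVal_affine, ← sideVal_affine, hE]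

lemma perline_nonneg {p1 p2 p3 p4 r s : Pl} (hrs : r ≠ s) (hC : Cross (p1,p3) (p2,p4)) :
    (phiLine (lineThrough r s) {(p1,p4),(p2,p3)} : ℤ)
      ≤ (phiLine (lineThrough r s) {(p1,p3),(p2,p4)} : ℤ) := by
  obtain ⟨hne1, hne2⟩ := seg_ne_seg' hC
  obtain ⟨t, u, ht0, ht1, hu0, hu1, hE⟩ := cross_param hC
  rw [lineThrough_eq hrs, phiLine_pair _ hne1, phiLine_pair _ hne2,
    LC_iff r s p1 p4, LC_iff r s p2 p3, LC_iff r s p1 p3, LC_iff r s p2 p4]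
  push_cast
  exact ind_ineq ht0 ht1 hu0 hu1 (sideVal_E hE)

set_option maxHeartbeats 2000000 in
lemma perline_one {p1 p2 p3 p4 q : Pl} (hC : Cross (p1,p3) (p2,p4))
    (hc : (p4.1-p1.1) * (p2.2-p1.2) - (p4.2-p1.2) * (p2.1-p1.1) ≠ 0)
    {a b : ℝ} (ha : 0 < a) (hb : 0 < b)
    (hq : q - p1 = a • (p4 - p1) + b • (p3 - p1)) :
    p1 ≠ q ∧ (phiLine (lineThrough p1 q) {(p1,p4),(p2,p3)} : ℤ) + 1
      ≤ (phiLine (lineThrough p1 q) {(p1,p3),(p2,p4)} : ℤ) := by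
  obtain ⟨hne1, hne2⟩ := seg_ne_seg' hC
  obtain ⟨t, u, ht0, ht1, hu0, hu1, hE⟩ := cross_param hC
  have hE1 : (1-t) * p1.1 + t * p3.1 = (1-u) * p2.1 + u * p4.1 := by
    have := congrArg Prod.fst hE; simpa [Prod.smul_def] using this
  have hE2 : (1-t) * p1.2 + t * p3.2 = (1-u) * p2.2 + u * p4.2 := by
    have := congrArg Prod.snd hE; simpa [Prod.smul_def] using this
  have hv1 : t * (p3.1 - p1.1) = (1-u) * (p2.1-p1.1) + u * (p4.1-p1.1) := by
    linear_combination hE1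
  have hv2 : t * (p3.2 - p1.2) = (1-u) * (p2.2-p1.2) + u * (p4.2-p1.2) := by
    linear_combination hE2
  have hq1 : q.1 - p1.1 = a * (p4.1-p1.1) + b * (p3.1-p1.1) := by
    have := congrArg Prod.fst hq; simpa [Prod.smul_def] using this
  have hq2 : q.2 - p1.2 = a * (p4.2-p1.2) + b * (p3.2-p1.2) := by
    have := congrArg Prod.snd hq; simpa [Prod.smul_def] using this
  obtain ⟨C, hCdef⟩ : ∃ C : ℝ, C = (p4.1-p1.1) * (p2.2-p1.2) - (p4.2-p1.2) * (p2.1-p1.1) :=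
    ⟨_, rfl⟩
  rw [← hCdef] at hc
  have hf2 : t * sideVal p1 q p2 = (a*t + b*u) * C := by
    simp only [sideVal]
    linear_combination t*(p2.2-p1.2)*hq1 - t*(p2.1-p1.1)*hq2 + b*(p2.2-p1.2)*hv1
      - b*(p2.1-p1.1)*hv2 - (a*t+b*u)*hCdef
  have hf4 : t * sideVal p1 q p4 = -(b*(1-u)) * C := by
    simp only [sideVal]
    linear_combination t*(p4.2-p1.2)*hq1 - t*(p4.1-p1.1)*hq2 + b*(p4.2-p1.2)*hv1
      - b*(p4.1-p1.1)*hv2 + b*(1-u)*hCdef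
  have hf3 : t * (t * sideVal p1 q p3) = a*t*(1-u) * C := by
    simp only [sideVal]
    linear_combination t*t*(p3.2-p1.2)*hq1 - t*t*(p3.1-p1.1)*hq2
      + a*t*(p4.1-p1.1)*hv2 - a*t*(p4.2-p1.2)*hv1 - a*t*(1-u)*hCdef
  have hf1 : sideVal p1 q p1 = 0 := by simp only [sideVal]; ring
  have hC2 : C^2 > 0 := by positivity
  have hp1q : p1 ≠ q := by
    rintro rfl
    have hz : sideVal p1 p1 p3 = 0 := by simp only [sideVal]; ring
    rw [hz] at hf3
    have hnz : a*t*(1-u)*C ≠ 0 := by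
      apply mul_ne_zero; apply mul_ne_zero; apply mul_ne_zero
      all_goals first | positivity | (intro h; nlinarith) | exact hc
    apply hnz
    rw [← hf3]; ring
  refine ⟨hp1q, ?_⟩
  rw [lineThrough_eq hp1q, phiLine_pair _ hne1, phiLine_pair _ hne2,
    LC_iff p1 q p1 p4, LC_iff p1 q p2 p3, LC_iff p1 q p1 p3, LC_iff p1 q p2 p4]
  rw [if_neg (show ¬ sideVal p1 q p1 * sideVal p1 q p4 < 0 by rw [hf1]; simp),
    if_neg (show ¬ sideVal p1 q p1 * sideVal p1 q p3 < 0 by rw [hf1]; simp)]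
  rw [if_neg (show ¬ sideVal p1 q p2 * sideVal p1 q p3 < 0 by
        push_neg
        have h1 : (t * sideVal p1 q p2) * (t * (t * sideVal p1 q p3)) ≥ 0 := by
          rw [hf2, hf3]
          nlinarith [mul_pos (mul_pos (add_pos (mul_pos ha ht0) (mul_pos hb hu0))
            (mul_pos (mul_pos ha ht0) (show (0:ℝ) < 1-u by linarith))) hC2]
        nlinarith [h1, pow_pos ht0 3])]
  have hpos : sideVal p1 q p2 * sideVal p1 q p4 < 0 := by
    have h1 : (t * sideVal p1 q p2) * (t * sideVal p1 q p4) < 0 := by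
      rw [hf2, hf4]
      nlinarith [mul_pos (mul_pos (add_pos (mul_pos ha ht0) (mul_pos hb hu0))
        (mul_pos hb (show (0:ℝ) < 1-u by linarith))) hC2]
    nlinarith [h1, mul_pos ht0 ht0]
  rw [if_pos hpos]
  push_cast

lemma linesOf_finite (P : Finset Pl) : (linesOf P).Finite := by
  apply Set.Finite.subset (Set.Finite.image (fun pq : Pl × Pl => lineThrough pq.1 pq.2)
    (P.finite_toSet.prod P.finite_toSet))
  rintro l ⟨p, hp, q, hq, hpq, rfl⟩
  exact ⟨(p,q), ⟨hp, hq⟩, rfl⟩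

lemma flipDrop_eq (P : Finset Pl) (p1 p2 p3 p4 : Pl) :
    flipDrop P p1 p2 p3 p4 = ∑ l ∈ (linesOf_finite P).toFinset,
      ((phiLine l {(p1,p3),(p2,p4)} : ℤ) - (phiLine l {(p1,p4),(p2,p3)} : ℤ)) :=
  finsum_mem_eq_finite_toFinset_sum _ (linesOf_finite P)

lemma mem_lineThrough_right (p q : Pl) : q ∈ lineThrough p q := by
  show Collinear ℝ ({p, q, q} : Set Pl)
  have : ({p, q, q} : Set Pl) = {p, q} := by simp
  rw [this]
  exact collinear_pair ℝ p q

lemma key_bound {P : Finset Pl} (hGP : GenPos ↑P) {p1 p2 p3 p4 : Pl}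
    (h1 : p1 ∈ P) (h2 : p2 ∈ P) (h4 : p4 ∈ P)
    (hC : Cross (p1,p3) (p2,p4)) (T : Finset Pl) (hTP : ∀ q ∈ T, q ∈ P)
    (hTq : ∀ q ∈ T, ∃ a b : ℝ, 0 < a ∧ 0 < b ∧ q - p1 = a • (p4 - p1) + b • (p3 - p1)) :
    (T.card : ℤ) ≤ flipDrop P p1 p2 p3 p4 := by
  obtain ⟨h13, h24, h12, h14, h32, h34⟩ := cross_distinct hC
  have hc : sideVal p1 p4 p2 ≠ 0 := by
    intro h0
    exact hGP p1 (by exact_mod_cast h1) p4 (by exact_mod_cast h4) p2 (by exact_mod_cast h2)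
      h14 h12 (Ne.symm h24) ((collinear_iff' p2 h14).2 h0)
  have hc' : (p4.1-p1.1) * (p2.2-p1.2) - (p4.2-p1.2) * (p2.1-p1.1) ≠ 0 := hc
  have hmain : ∀ q ∈ T, p1 ≠ q ∧
      (phiLine (lineThrough p1 q) {(p1,p4),(p2,p3)} : ℤ) + 1
        ≤ (phiLine (lineThrough p1 q) {(p1,p3),(p2,p4)} : ℤ) := by
    intro q hqT
    obtain ⟨a, b, ha, hb, hq⟩ := hTq q hqT
    exact perline_one hC hc' ha hb hq
  have hinj : Set.InjOn (fun q => lineThrough p1 q) ↑T := by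
    intro q hq q' hq' heq
    by_contra hne
    have hq1 : p1 ≠ q := (hmain q (by exact_mod_cast hq)).1
    have hq1' : p1 ≠ q' := (hmain q' (by exact_mod_cast hq')).1
    have hmem : q' ∈ lineThrough p1 q := by
      rw [show lineThrough p1 q = lineThrough p1 q' from heq]
      exact mem_lineThrough_right p1 q'
    have hcol : Collinear ℝ ({p1, q, q'} : Set Pl) := hmem
    exact hGP p1 (by exact_mod_cast h1) q (by exact_mod_cast hTP q (by exact_mod_cast hq))
      q' (by exact_mod_cast hTP q' (by exact_mod_cast hq')) hq1 hq1' hne hcol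
  set g : Set Pl → ℤ := fun l =>
    (phiLine l {(p1,p3),(p2,p4)} : ℤ) - (phiLine l {(p1,p4),(p2,p3)} : ℤ) with hg
  have himg : T.image (fun q => lineThrough p1 q) ⊆ (linesOf_finite P).toFinset := by
    intro l hl
    obtain ⟨q, hq, rfl⟩ := Finset.mem_image.1 hl
    rw [Set.Finite.mem_toFinset]
    exact ⟨p1, h1, q, hTP q hq, (hmain q hq).1, rfl⟩
  have hcard : (T.image (fun q => lineThrough p1 q)).card = T.card :=
    Finset.card_image_of_injOn hinj
  rw [flipDrop_eq]
  calc (T.card : ℤ) = ∑ _l ∈ T.image (fun q => lineThrough p1 q), (1 : ℤ) := by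
        simp [hcard]
    _ ≤ ∑ l ∈ T.image (fun q => lineThrough p1 q), g l := by
        apply Finset.sum_le_sum
        intro l hl
        obtain ⟨q, hq, rfl⟩ := Finset.mem_image.1 hl
        have := (hmain q hq).2
        simp only [hg]
        omega
    _ ≤ ∑ l ∈ (linesOf_finite P).toFinset, g l := by
        apply Finset.sum_le_sum_of_subset_of_nonneg himg
        intro l hl _
        rw [Set.Finite.mem_toFinset] at hl
        obtain ⟨r, hr, s, hs, hrs, rfl⟩ := hl
        have := perline_nonneg hrs hC
        simp only [hg]
        omega

lemma vec_decomp {u v z : Pl} (h : u.1 * v.2 - u.2 * v.1 ≠ 0) :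
    z = ((z.1 * v.2 - z.2 * v.1)/(u.1 * v.2 - u.2 * v.1)) • u
        + ((u.1 * z.2 - u.2 * z.1)/(u.1 * v.2 - u.2 * v.1)) • v := by
  have h1 : z.1 * (u.1 * v.2 - u.2 * v.1)
      = (z.1 * v.2 - z.2 * v.1) * u.1 + (u.1 * z.2 - u.2 * z.1) * v.1 := by ring
  have h2 : z.2 * (u.1 * v.2 - u.2 * v.1)
      = (z.1 * v.2 - z.2 * v.1) * u.2 + (u.1 * z.2 - u.2 * z.1) * v.2 := by ring
  ext
  · simp only [Prod.fst_add, Prod.smul_fst, smul_eq_mul]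
    rw [div_mul_eq_mul_div, div_mul_eq_mul_div, ← add_div, eq_div_iff h]
    linarith [h1]
  · simp only [Prod.snd_add, Prod.smul_snd, smul_eq_mul]
    rw [div_mul_eq_mul_div, div_mul_eq_mul_div, ← add_div, eq_div_iff h]
    linarith [h2]

lemma sideBound {P : Finset Pl} (hGP : GenPos ↑P) (k : ℕ) {p1 p4 : Pl}
    (h1 : p1 ∈ P) (h4 : p4 ∈ P) (h14 : p1 ≠ p4) (σ : ℝ) (hσ : σ = 1 ∨ σ = -1) :
    Set.ncard {p3 : Pl | (p3 ∈ P ∧ ∃ p2 ∈ P,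
        Cross (p1, p3) (p2, p4) ∧ ¬ Cross (p1, p4) (p2, p3) ∧
        flipDrop P p1 p2 p3 p4 < (k : ℤ)) ∧ 0 < σ * sideVal p1 p4 p3} ≤ k := by
  have hσ2 : σ^2 = 1 := by rcases hσ with rfl | rfl <;> norm_num
  have hσne : σ ≠ 0 := by rcases hσ with rfl | rfl <;> norm_num
  set A := {p3 : Pl | (p3 ∈ P ∧ ∃ p2 ∈ P,
        Cross (p1, p3) (p2, p4) ∧ ¬ Cross (p1, p4) (p2, p3) ∧
        flipDrop P p1 p2 p3 p4 < (k : ℤ)) ∧ 0 < σ * sideVal p1 p4 p3} with hA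
  have hAP : A ⊆ ↑P := fun q hq => hq.1.1
  have hAfin : A.Finite := P.finite_toSet.subset hAP
  by_contra hcon
  push_neg at hcon
  set F := hAfin.toFinset with hF
  have hFcard : k + 1 ≤ F.card := by
    rw [Set.ncard_eq_toFinset_card A hAfin] at hcon
    show k + 1 ≤ hAfin.toFinset.card
    omega
  have hFne : F.Nonempty := Finset.card_pos.1 (by omega)
  -- |u|^2 > 0
  have huu : 0 < (p4.1-p1.1)^2 + (p4.2-p1.2)^2 := by
    by_cases h : p4.1 - p1.1 = 0
    · have h2 : p4.2 - p1.2 ≠ 0 := by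
        intro h2
        apply h14
        have e1 : p4.1 = p1.1 := by linarith
        have e2 : p4.2 = p1.2 := by linarith
        exact (Prod.ext_iff.2 ⟨e1.symm, e2.symm⟩)
      rcases lt_or_gt_of_ne h2 with hh | hh <;> nlinarith
    · rcases lt_or_gt_of_ne h with hh | hh <;> nlinarith
  set key : Pl → ℝ := fun q =>
    ((p4.1-p1.1)*(q.1-p1.1) + (p4.2-p1.2)*(q.2-p1.2)) / (σ * sideVal p1 p4 q) with hkey
  obtain ⟨m, hmF, hmmin⟩ := F.exists_min_image key hFne
  have hmA : m ∈ A := (Set.Finite.mem_toFinset hAfin).1 hmF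
  have hmP : m ∈ P := hmA.1.1
  have hmσ : 0 < σ * sideVal p1 p4 m := hmA.2
  have hp1m : m ≠ p1 := by
    intro h
    rw [h] at hmσ
    have : sideVal p1 p4 p1 = 0 := by simp [sideVal]
    rw [this] at hmσ
    simp at hmσ
  set T := F.erase m with hT
  have hTcard : k ≤ T.card := by
    rw [hT, Finset.card_erase_of_mem hmF]
    omega
  have hTP : ∀ q ∈ T, q ∈ P := fun q hq =>
    ((Set.Finite.mem_toFinset hAfin).1 (Finset.mem_of_mem_erase hq)).1.1
  have hTq : ∀ q ∈ T, ∃ a b : ℝ, 0 < a ∧ 0 < b ∧ q - p1 = a • (p4 - p1) + b • (m - p1) := by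
    intro q hqT
    have hqF : q ∈ F := Finset.mem_of_mem_erase hqT
    have hqm : q ≠ m := Finset.ne_of_mem_erase hqT
    have hqA : q ∈ A := (Set.Finite.mem_toFinset hAfin).1 hqF
    have hqP : q ∈ P := hqA.1.1
    have hqσ : 0 < σ * sideVal p1 p4 q := hqA.2
    have hp1q : q ≠ p1 := by
      intro h
      rw [h] at hqσ
      have : sideVal p1 p4 p1 = 0 := by simp [sideVal]
      rw [this] at hqσ
      simp at hqσ
    -- sideVal p1 q m ≠ 0 by general position
    have hX : sideVal p1 q m ≠ 0 := by
      intro h0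
      exact hGP p1 h1 q hqP m hmP (Ne.symm hp1q) (Ne.symm hp1m) hqm
        ((collinear_iff' m (Ne.symm hp1q)).2 h0)
    -- key difference identity
    have hid : key q - key m =
        (((p4.1-p1.1)^2 + (p4.2-p1.2)^2) * σ * sideVal p1 q m) /
          ((σ * sideVal p1 p4 q) * (σ * sideVal p1 p4 m)) := by
      rw [hkey]
      simp only []
      rw [div_sub_div _ _ (ne_of_gt hqσ) (ne_of_gt hmσ)]
      congr 1
      simp only [sideVal]
      ring
    have hklt : key m < key q := by
      rcases lt_or_eq_of_le (hmmin q hqF) with h | h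
      · exact h
      · exfalso
        apply hX
        have h0 : key q - key m = 0 := by rw [← h]; ring
        rw [hid] at h0
        have hden : (σ * sideVal p1 p4 q) * (σ * sideVal p1 p4 m) > 0 := mul_pos hqσ hmσ
        rw [div_eq_zero_iff] at h0
        rcases h0 with h0 | h0
        · rcases mul_eq_zero.1 h0 with h0 | h0
          · rcases mul_eq_zero.1 h0 with h0 | h0
            · linarith
            · exact absurd h0 hσne
          · exact h0
        · linarith
    have hXpos : 0 < σ * sideVal p1 q m := by
      have hd : 0 < key q - key m := by linarith
      rw [hid] at hd
      have hden : 0 < (σ * sideVal p1 p4 q) * (σ * sideVal p1 p4 m) := mul_pos hqσ hmσ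
      have hnum : 0 < ((p4.1-p1.1)^2 + (p4.2-p1.2)^2) * σ * sideVal p1 q m :=
        (div_pos_iff.1 hd).elim (fun h => h.1) (fun h => by linarith [h.2])
      nlinarith [huu]
    -- decomposition
    have hdm : (p4-p1).1 * (m-p1).2 - (p4-p1).2 * (m-p1).1 ≠ 0 := by
      simp only [Prod.fst_sub, Prod.snd_sub]
      intro h0
      have : sideVal p1 p4 m = 0 := by simp only [sideVal]; linarith
      rw [this] at hmσ
      simp at hmσ
    have hdec := vec_decomp (u := p4 - p1) (v := m - p1) (z := q - p1) hdm
    have e1 : (q-p1).1 * (m-p1).2 - (q-p1).2 * (m-p1).1 = sideVal p1 q m := by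
      simp only [sideVal, Prod.fst_sub, Prod.snd_sub]; try ring
    have e2 : (p4-p1).1 * (m-p1).2 - (p4-p1).2 * (m-p1).1 = sideVal p1 p4 m := by
      simp only [sideVal, Prod.fst_sub, Prod.snd_sub]; try ring
    have e3 : (p4-p1).1 * (q-p1).2 - (p4-p1).2 * (q-p1).1 = sideVal p1 p4 q := by
      simp only [sideVal, Prod.fst_sub, Prod.snd_sub]; try ring
    rw [e1, e2, e3] at hdec
    have hsm : 0 < σ * sideVal p1 p4 m := hmσ
    refine ⟨_, _, ?_, ?_, hdec⟩
    · rw [show sideVal p1 q m / sideVal p1 p4 m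
          = (σ * sideVal p1 q m) / (σ * sideVal p1 p4 m) from
        (mul_div_mul_left _ _ hσne).symm]
      exact div_pos hXpos hsm
    · rw [show sideVal p1 p4 q / sideVal p1 p4 m
          = (σ * sideVal p1 p4 q) / (σ * sideVal p1 p4 m) from
        (mul_div_mul_left _ _ hσne).symm]
      exact div_pos hqσ hsm
  obtain ⟨hmP', p2, hp2P, hCr, hnC, hdrop⟩ := hmA.1
  have hkb := key_bound hGP h1 hp2P h4 hCr T hTP hTq
  have hk' : (k : ℤ) ≤ (T.card : ℤ) := by exact_mod_cast hTcard
  linarith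


lemma stmt2core {P : Finset Pl} (hGP : GenPos ↑P) (k : ℕ) {p1 p4 : Pl}
    (h1 : p1 ∈ P) (h4 : p4 ∈ P) (h14 : p1 ≠ p4) :
    Set.ncard {p3 : Pl | p3 ∈ P ∧ ∃ p2 ∈ P, Cross (p1, p3) (p2, p4) ∧
      ¬ Cross (p1, p4) (p2, p3) ∧ flipDrop P p1 p2 p3 p4 < (k : ℤ)} ≤ 2 * k := by
  set Cnd := fun p3 : Pl => p3 ∈ P ∧ ∃ p2 ∈ P, Cross (p1, p3) (p2, p4) ∧
      ¬ Cross (p1, p4) (p2, p3) ∧ flipDrop P p1 p2 p3 p4 < (k : ℤ) with hCnd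
  have hsub : {p3 : Pl | Cnd p3} ⊆
      {p3 : Pl | Cnd p3 ∧ 0 < (1:ℝ) * sideVal p1 p4 p3} ∪
      {p3 : Pl | Cnd p3 ∧ 0 < (-1:ℝ) * sideVal p1 p4 p3} := by
    intro p3 hp3
    obtain ⟨hp3P, p2, hp2, hCr, hnC, hd⟩ := hp3
    obtain ⟨h13, -, -, -, -, h34⟩ := cross_distinct hCr
    have hnz : sideVal p1 p4 p3 ≠ 0 := by
      intro h0
      exact hGP p1 h1 p4 h4 p3 hp3P h14 h13 (Ne.symm h34) ((collinear_iff' p3 h14).2 h0)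
    rcases lt_or_gt_of_ne hnz with hh | hh
    · right
      exact ⟨⟨hp3P, p2, hp2, hCr, hnC, hd⟩, by linarith⟩
    · left
      exact ⟨⟨hp3P, p2, hp2, hCr, hnC, hd⟩, by linarith⟩
  have hfin : ∀ σ : ℝ, ({p3 : Pl | Cnd p3 ∧ 0 < σ * sideVal p1 p4 p3}).Finite :=
    fun σ => P.finite_toSet.subset (fun q hq => hq.1.1)
  calc Set.ncard {p3 : Pl | Cnd p3}
      ≤ Set.ncard ({p3 : Pl | Cnd p3 ∧ 0 < (1:ℝ) * sideVal p1 p4 p3} ∪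
          {p3 : Pl | Cnd p3 ∧ 0 < (-1:ℝ) * sideVal p1 p4 p3}) :=
        Set.ncard_le_ncard hsub ((hfin 1).union (hfin (-1)))
    _ ≤ Set.ncard {p3 : Pl | Cnd p3 ∧ 0 < (1:ℝ) * sideVal p1 p4 p3} +
          Set.ncard {p3 : Pl | Cnd p3 ∧ 0 < (-1:ℝ) * sideVal p1 p4 p3} :=
        Set.ncard_union_le _ _
    _ ≤ k + k := by
        have b1 := sideBound hGP k h1 h4 h14 1 (Or.inl rfl)
        have b2 := sideBound hGP k h1 h4 h14 (-1) (Or.inr rfl)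
        simp only [hCnd]
        exact add_le_add b1 b2
    _ = 2 * k := by ring

lemma segSet_swap (a b : Pl) : segSet (b, a) = segSet (a, b) := segment_symm ℝ b a

lemma LC_swap (l : Set Pl) (a b : Pl) : LineCross l (a, b) ↔ LineCross l (b, a) := by
  unfold LineCross
  rw [show segSet (b, a) = segSet (a, b) from segSet_swap a b]
  exact ⟨fun ⟨x, h, h1, h2⟩ => ⟨x, h, h2, h1⟩, fun ⟨x, h, h1, h2⟩ => ⟨x, h, h2, h1⟩⟩

lemma cross_symm {s t : Seg} (h : Cross s t) : Cross t s := by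
  obtain ⟨x, hx, h1, h2, h3, h4⟩ := h
  exact ⟨x, by rw [Set.inter_comm]; exact hx, h3, h4, h1, h2⟩

lemma cross_swap_fst {a b : Pl} {t : Seg} (h : Cross (a, b) t) : Cross (b, a) t := by
  obtain ⟨x, hx, h1, h2, h3, h4⟩ := h
  exact ⟨x, by rw [show segSet (b,a) = segSet (a,b) from segSet_swap a b]; exact hx,
    h2, h1, h3, h4⟩

lemma cross_swap_snd {a b : Pl} {t : Seg} (h : Cross t (a, b)) : Cross t (b, a) :=
  cross_symm (cross_swap_fst (cross_symm h))

lemma flipDrop_swap {P : Finset Pl} {p1 p2 p3 p4 : Pl} (hC : Cross (p1,p3) (p2,p4)) :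
    flipDrop P p4 p3 p2 p1 = flipDrop P p1 p2 p3 p4 := by
  rw [flipDrop_eq, flipDrop_eq]
  apply Finset.sum_congr rfl
  intro l _
  obtain ⟨h13, h24, h12, h14, h32, h34⟩ := cross_distinct hC
  have ne1 : ((p4,p2) : Seg) ≠ (p3,p1) := fun h => h34 (congrArg Prod.fst h).symm
  have ne2 : ((p4,p1) : Seg) ≠ (p3,p2) := fun h => h34 (congrArg Prod.fst h).symm
  have ne3 : ((p1,p3) : Seg) ≠ (p2,p4) := fun h => h12 (congrArg Prod.fst h)
  have ne4 : ((p1,p4) : Seg) ≠ (p2,p3) := fun h => h12 (congrArg Prod.fst h)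
  rw [phiLine_pair _ ne1, phiLine_pair _ ne2, phiLine_pair _ ne3, phiLine_pair _ ne4,
    LC_swap l p4 p2, LC_swap l p3 p1, LC_swap l p4 p1, LC_swap l p3 p2]
  push_cast
  ring


end

/-- the number of distinct flips on `P` with line-potential drop `< k` is
at most `C · n² · k²`; more precisely, for every fixed directed final segment `p1p4`
there are at most `2k` choices of `p3` admitting such a flip. -/
theorem stmt12 :
    ∃ C : ℕ, 0 < C ∧ ∀ (n k : ℕ) (P : Finset Pl), P.card = 2 * n →
      GenPos (P : Set Pl) → 1 ≤ k →
      (Set.ncard {q : Pl × Pl × Pl × Pl |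
          q.1 ∈ P ∧ q.2.1 ∈ P ∧ q.2.2.1 ∈ P ∧ q.2.2.2 ∈ P ∧
          Cross (q.1, q.2.2.1) (q.2.1, q.2.2.2) ∧
          ¬ Cross (q.1, q.2.2.2) (q.2.1, q.2.2.1) ∧
          flipDrop P q.1 q.2.1 q.2.2.1 q.2.2.2 < (k : ℤ)} ≤ C * n ^ 2 * k ^ 2) ∧
      ∀ p1 ∈ P, ∀ p4 ∈ P, p1 ≠ p4 →
        Set.ncard {p3 : Pl | p3 ∈ P ∧ ∃ p2 ∈ P,
          Cross (p1, p3) (p2, p4) ∧ ¬ Cross (p1, p4) (p2, p3) ∧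
          flipDrop P p1 p2 p3 p4 < (k : ℤ)} ≤ 2 * k := by
  refine ⟨16, by norm_num, ?_⟩
  intro n k P hPcard hGP hk
  constructor
  swap
  · intro p1 h1 p4 h4 h14
    exact stmt2core hGP k h1 h4 h14
  -- main count
  set Fq : Finset (Pl × Pl × Pl × Pl) :=
    (P ×ˢ P ×ˢ P ×ˢ P).filter (fun q =>
      Cross (q.1, q.2.2.1) (q.2.1, q.2.2.2) ∧
      ¬ Cross (q.1, q.2.2.2) (q.2.1, q.2.2.1) ∧
      flipDrop P q.1 q.2.1 q.2.2.1 q.2.2.2 < (k : ℤ)) with hFq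
  have hQeq : {q : Pl × Pl × Pl × Pl |
      q.1 ∈ P ∧ q.2.1 ∈ P ∧ q.2.2.1 ∈ P ∧ q.2.2.2 ∈ P ∧
      Cross (q.1, q.2.2.1) (q.2.1, q.2.2.2) ∧
      ¬ Cross (q.1, q.2.2.2) (q.2.1, q.2.2.1) ∧
      flipDrop P q.1 q.2.1 q.2.2.1 q.2.2.2 < (k : ℤ)} = ↑Fq := by
    ext ⟨a, b, c, d⟩
    simp only [hFq, Finset.coe_filter, Finset.mem_product, Set.mem_setOf_eq]
    tauto
  rw [hQeq, Set.ncard_coe_finset]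
  have hbound : Fq.card ≤ (4 * k * k) * ((Fq.image (fun q => (q.1, q.2.2.2))).card) := by
    apply Finset.card_le_mul_card_image
    intro ab hab
    obtain ⟨q0, hq0, hq0ab⟩ := Finset.mem_image.1 hab
    set a := ab.1 with hadef
    set b := ab.2 with hbdef
    have hq0m := Finset.mem_filter.1 hq0
    have hq01 : q0.1 = a := by rw [hadef, ← hq0ab]
    have hq04 : q0.2.2.2 = b := by rw [hbdef, ← hq0ab]
    have haP : a ∈ P := by
      rw [← hq01]; exact (Finset.mem_product.1 hq0m.1).1
    have hbP : b ∈ P := by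
      rw [← hq04]
      exact (Finset.mem_product.1 (Finset.mem_product.1
        (Finset.mem_product.1 hq0m.1).2).2).2
    have hab' : a ≠ b := by
      have := (cross_distinct hq0m.2.1).2.2.2.1
      rw [hq01, hq04] at this
      exact this
    -- the two 2k-sets
    set A3 := {p3 : Pl | p3 ∈ P ∧ ∃ p2 ∈ P, Cross (a, p3) (p2, b) ∧
      ¬ Cross (a, b) (p2, p3) ∧ flipDrop P a p2 p3 b < (k : ℤ)} with hA3
    set A2 := {p2 : Pl | p2 ∈ P ∧ ∃ w ∈ P, Cross (b, p2) (w, a) ∧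
      ¬ Cross (b, a) (w, p2) ∧ flipDrop P b w p2 a < (k : ℤ)} with hA2
    have hA3fin : A3.Finite := P.finite_toSet.subset (fun q hq => hq.1)
    have hA2fin : A2.Finite := P.finite_toSet.subset (fun q hq => hq.1)
    have hA3card : hA3fin.toFinset.card ≤ 2 * k := by
      rw [← Set.ncard_eq_toFinset_card A3 hA3fin]
      exact stmt2core hGP k haP hbP hab'
    have hA2card : hA2fin.toFinset.card ≤ 2 * k := by
      rw [← Set.ncard_eq_toFinset_card A2 hA2fin]
      exact stmt2core hGP k hbP haP (Ne.symm hab')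
    have hmap : ∀ q ∈ Fq.filter (fun x => (x.1, x.2.2.2) = ab),
        (fun x : Pl × Pl × Pl × Pl => (x.2.1, x.2.2.1)) q ∈
          hA2fin.toFinset ×ˢ hA3fin.toFinset := by
      intro q hq
      obtain ⟨hqFq, hqab⟩ := Finset.mem_filter.1 hq
      obtain ⟨hqprod, hCr, hnC, hdrop⟩ := Finset.mem_filter.1 hqFq
      have hq1 : q.1 = a := by rw [hadef, ← hqab]
      have hq4 : q.2.2.2 = b := by rw [hbdef, ← hqab]
      rw [hq1] at hCr hnC hdrop
      rw [hq4] at hCr hnC hdrop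
      have hp2P : q.2.1 ∈ P := (Finset.mem_product.1 (Finset.mem_product.1 hqprod).2).1
      have hp3P : q.2.2.1 ∈ P :=
        (Finset.mem_product.1 (Finset.mem_product.1 (Finset.mem_product.1 hqprod).2).2).1
      rw [Finset.mem_product]
      constructor
      · rw [Set.Finite.mem_toFinset]
        refine ⟨hp2P, q.2.2.1, hp3P, ?_, ?_, ?_⟩
        · exact cross_swap_snd (cross_swap_fst (cross_symm hCr))
        · intro hcc
          exact hnC (cross_swap_snd (cross_swap_fst hcc))
        · rw [flipDrop_swap hCr]
          exact hdrop
      · rw [Set.Finite.mem_toFinset]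
        exact ⟨hp3P, q.2.1, hp2P, hCr, hnC, hdrop⟩
    have hinj : Set.InjOn (fun x : Pl × Pl × Pl × Pl => (x.2.1, x.2.2.1))
        ↑(Fq.filter (fun x => (x.1, x.2.2.2) = ab)) := by
      intro q hq q' hq' heq
      simp only [Finset.coe_filter, Set.mem_setOf_eq] at hq hq'
      obtain ⟨f1, f4⟩ := Prod.ext_iff.1 hq.2
      obtain ⟨g1, g4⟩ := Prod.ext_iff.1 hq'.2
      obtain ⟨e2, e3⟩ := Prod.ext_iff.1 heq
      have e1 : q.1 = q'.1 := by rw [f1, g1]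
      have e4 : q.2.2.2 = q'.2.2.2 := by
        simp only at f4 g4
        rw [f4, g4]
      exact Prod.ext e1 (Prod.ext e2 (Prod.ext e3 e4))
    calc (Fq.filter (fun x => (x.1, x.2.2.2) = ab)).card
        ≤ (hA2fin.toFinset ×ˢ hA3fin.toFinset).card :=
          Finset.card_le_card_of_injOn _ hmap hinj
      _ = hA2fin.toFinset.card * hA3fin.toFinset.card := Finset.card_product _ _
      _ ≤ (2 * k) * (2 * k) := Nat.mul_le_mul hA2card hA3card
      _ = 4 * k * k := by ring
  have himg : (Fq.image (fun q => (q.1, q.2.2.2))).card ≤ (2 * n) * (2 * n) := by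
    calc (Fq.image (fun q => (q.1, q.2.2.2))).card ≤ (P ×ˢ P).card := by
          apply Finset.card_le_card
          intro ab hab
          obtain ⟨q0, hq0, hq0ab⟩ := Finset.mem_image.1 hab
          have hq0m := Finset.mem_filter.1 hq0
          rw [Finset.mem_product, ← hq0ab]
          exact ⟨(Finset.mem_product.1 hq0m.1).1,
            (Finset.mem_product.1 (Finset.mem_product.1
              (Finset.mem_product.1 hq0m.1).2).2).2⟩
      _ = (2 * n) * (2 * n) := by rw [Finset.card_product, hPcard]
  calc Fq.card ≤ (4 * k * k) * ((Fq.image (fun q => (q.1, q.2.2.2))).card) := hbound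
    _ ≤ (4 * k * k) * ((2 * n) * (2 * n)) := Nat.mul_le_mul_left _ himg
    _ = 16 * n ^ 2 * k ^ 2 := by ring
end
end

section
/- 2·D_MM(n) ≤ D_RB(2n): for any point set P of 2n points with a perfect matching admitting a flip sequence of length m, there exists a 2-colored point set of 4n points (2n red, 2n blue) with a red-blue perfect matching of 2n segments admitting a flip sequence of length 2m, obtained by duplicating each point into an arbitrarily close red-blue pair and simulating each monochromatic flip by two red-blue flips. -/
open scoped Classical

noncomputable section

namespace Stmt15

/-- 2D cross product. -/
def cr (u w : Pl) : ℝ := u.1 * w.2 - u.2 * w.1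

lemma sideVal_eq (a b x : Pl) : sideVal a b x = cr (b - a) (x - a) := by
  simp only [sideVal, cr, Prod.fst_sub, Prod.snd_sub]; try ring

lemma cr_add_right (u w z : Pl) : cr u (w + z) = cr u w + cr u z := by
  simp only [cr, Prod.fst_add, Prod.snd_add]; try ring

lemma cr_sub_right (u w z : Pl) : cr u (w - z) = cr u w - cr u z := by
  simp only [cr, Prod.fst_sub, Prod.snd_sub]; try ring

lemma cr_smul_right (u : Pl) (t : ℝ) (w : Pl) : cr u (t • w) = t * cr u w := by
  simp only [cr, Prod.smul_fst, Prod.smul_snd, smul_eq_mul]; ring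

lemma cr_self (u : Pl) : cr u u = 0 := by simp [cr, mul_comm]

lemma cr_skew (u w : Pl) : cr u w = - cr w u := by simp [cr]; ring

lemma cr_zero_left (w : Pl) : cr 0 w = 0 := by simp [cr]

lemma eq_smul_of_cr_eq_zero {u w : Pl} (hu : u ≠ 0) (h : cr u w = 0) :
    ∃ t : ℝ, w = t • u := by
  rcases eq_or_ne u.1 0 with h1 | h1
  · have h2 : u.2 ≠ 0 := by
      intro h2; exact hu (Prod.ext h1 h2)
    refine ⟨w.2 / u.2, ?_⟩
    have hw1 : w.1 = 0 := by
      have := h; simp only [cr, h1, zero_mul, zero_sub, neg_eq_zero, mul_eq_zero] at this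
      rcases this with h' | h'
      · exact absurd h' h2
      · exact h'
    apply Prod.ext
    · simp [hw1, h1, Prod.smul_fst]
    · rw [Prod.smul_snd, smul_eq_mul, div_mul_cancel₀ _ h2]
  · refine ⟨w.1 / u.1, ?_⟩
    apply Prod.ext
    · rw [Prod.smul_fst, smul_eq_mul, div_mul_cancel₀ _ h1]
    · have : w.2 = u.2 * w.1 / u.1 := by
        field_simp
        simp only [cr] at h
        nlinarith [h]
      rw [this]; simp only [Prod.smul_snd, smul_eq_mul]; ring

lemma eq_zero_of_two_cr {u w z : Pl} (huw : cr u w ≠ 0) (h1 : cr u z = 0)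
    (h2 : cr w z = 0) : z = 0 := by
  have hu : u ≠ 0 := by rintro rfl; exact huw (cr_zero_left w)
  obtain ⟨t, rfl⟩ := eq_smul_of_cr_eq_zero hu h1
  rw [cr_smul_right] at h2
  rcases mul_eq_zero.1 h2 with ht | ht
  · rw [ht, zero_smul]
  · exact absurd (by rw [cr_skew u w, ht, neg_zero]) huw

lemma mem_seg {a b x : Pl} : x ∈ segment ℝ a b ↔ ∃ t : ℝ, 0 ≤ t ∧ t ≤ 1 ∧ x = a + t • (b - a) := by
  rw [segment_eq_image']
  constructor
  · rintro ⟨t, ht, rfl⟩; exact ⟨t, ht.1, ht.2, rfl⟩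
  · rintro ⟨t, h0, h1, rfl⟩; exact ⟨t, ⟨h0, h1⟩, rfl⟩

lemma param_bounds {A B : ℝ} (h : A * B < 0) : 0 < A / (A - B) ∧ A / (A - B) < 1 := by
  rcases lt_trichotomy A 0 with hA | hA | hA
  · have hB : 0 < B := by nlinarith
    have hden : A - B < 0 := by linarith
    constructor
    · exact div_pos_of_neg_of_neg hA hden
    · rw [div_lt_one_iff]; right; right; exact ⟨hden, by linarith⟩
  · simp [hA] at h
  · have hB : B < 0 := by nlinarith
    have hden : 0 < A - B := by linarith
    exact ⟨div_pos hA hden, (div_lt_one hden).2 (by linarith)⟩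


lemma cr_comb (w a c r1 r2 : Pl) (t s : ℝ) :
    cr w (a + t • r1 - (c + s • r2)) = cr w (a - c) + t * cr w r1 - s * cr w r2 := by
  simp only [cr, Prod.fst_add, Prod.snd_add, Prod.fst_sub, Prod.snd_sub, Prod.smul_fst,
    Prod.smul_snd, smul_eq_mul]
  ring

lemma cr_zero_right (u : Pl) : cr u 0 = 0 := by simp [cr]

lemma cr_neg_right (u w : Pl) : cr u (-w) = - cr u w := by
  simp only [cr, Prod.fst_neg, Prod.snd_neg]; ring

lemma products_of_common_point {a b c d y : Pl}
    (hy1 : y ∈ segment ℝ a b) (hy2 : y ∈ segment ℝ c d)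
    (h1 : cr (b - a) (c - a) ≠ 0) (h2 : cr (b - a) (d - a) ≠ 0)
    (h3 : cr (d - c) (a - c) ≠ 0) (h4 : cr (d - c) (b - c) ≠ 0) :
    sideVal a b c * sideVal a b d < 0 ∧ sideVal c d a * sideVal c d b < 0 := by
  obtain ⟨t, ht0, ht1, rfl⟩ := mem_seg.1 hy1
  obtain ⟨s, hs0, hs1, heq⟩ := mem_seg.1 hy2
  set u := b - a with hu
  set w := d - c with hw
  set C := cr u (c - a) with hC
  set D := cr u (d - a) with hD
  set A := cr w (a - c) with hA
  set B := cr w (b - c) with hB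
  have hDC : cr u w = D - C := by
    rw [hD, hC, ← cr_sub_right]; congr 1; rw [hw]; abel
  have hBA : cr w u = B - A := by
    rw [hB, hA, ← cr_sub_right]; congr 1; rw [hu]; abel
  have key1 : A + t * (B - A) = 0 := by
    have h := congrArg (fun z => cr w (z - (c + s • w))) heq
    rw [cr_comb, cr_comb] at h
    simp only [cr_self, cr_zero_right, mul_zero, sub_zero, sub_self, zero_add, add_zero] at h
    rw [hBA] at h
    linarith [h]
  have key2 : C + s * (D - C) = 0 := by
    have h := congrArg (fun z => cr u ((c + s • w) - z)) heq.symm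
    rw [cr_comb, cr_comb] at h
    simp only [cr_self, cr_zero_right, mul_zero, sub_zero, sub_self, zero_add, add_zero] at h
    rw [hDC] at h
    linarith [h]
  have ht0' : 0 < t := by
    rcases ht0.lt_or_eq with h | h
    · exact h
    · exfalso; rw [← h] at key1; simp at key1; exact h3 key1
  have ht1' : t < 1 := by
    rcases ht1.lt_or_eq with h | h
    · exact h
    · exfalso; rw [h] at key1; exact h4 (by linarith [key1])
  have hs0' : 0 < s := by
    rcases hs0.lt_or_eq with h | h
    · exact h
    · exfalso; rw [← h] at key2; simp at key2; exact h1 key2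
  have hs1' : s < 1 := by
    rcases hs1.lt_or_eq with h | h
    · exact h
    · exfalso; rw [h] at key2; exact h2 (by linarith [key2])
  have hC2 : 0 < C * C := by rcases h1.lt_or_gt with h | h <;> nlinarith
  have hA2 : 0 < A * A := by rcases h3.lt_or_gt with h | h <;> nlinarith
  have hid1 : s * (C * D) = (s - 1) * (C * C) := by linear_combination C * key2
  have hid2 : t * (A * B) = (t - 1) * (A * A) := by linear_combination A * key1
  constructor
  · rw [sideVal_eq, sideVal_eq, ← hu, ← hC, ← hD]; nlinarith [hid1]
  · rw [sideVal_eq, sideVal_eq, ← hw, ← hA, ← hB]; nlinarith [hid2]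

lemma cross_of_signs {a b c d : Pl}
    (h1 : sideVal a b c * sideVal a b d < 0)
    (h2 : sideVal c d a * sideVal c d b < 0) :
    Cross (a, b) (c, d) := by
  rw [sideVal_eq, sideVal_eq] at h1 h2
  set u := b - a with hu
  set w := d - c with hw
  set C := cr u (c - a) with hC
  set D := cr u (d - a) with hD
  set A := cr w (a - c) with hA
  set B := cr w (b - c) with hB
  have hDC : cr u w = D - C := by
    rw [hD, hC, ← cr_sub_right]; congr 1; rw [hw]; abel
  have hBA : cr w u = B - A := by
    rw [hB, hA, ← cr_sub_right]; congr 1; rw [hu]; abel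
  have hCD : C - D ≠ 0 := by
    intro h
    have hD' : D = C := by linarith
    rw [hD'] at h1; nlinarith [mul_self_nonneg C]
  have hAB : A - B ≠ 0 := by
    intro h
    have hB' : B = A := by linarith
    rw [hB'] at h2; nlinarith [mul_self_nonneg A]
  have huw : cr u w ≠ 0 := by rw [hDC]; intro h; exact hCD (by linarith)
  set t := A / (A - B) with htdef
  set s := C / (C - D) with hsdef
  obtain ⟨ht0, ht1⟩ := param_bounds h2
  obtain ⟨hs0, hs1⟩ := param_bounds h1
  rw [← htdef] at ht0 ht1
  rw [← hsdef] at hs0 hs1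
  have htBA : t * (B - A) = -A := by
    rw [htdef]; field_simp; ring
  have hsDC : s * (D - C) = -C := by
    rw [hsdef]; field_simp; ring
  set x := a + t • u with hx
  have hxw : x = c + s • w := by
    have hz1 : cr u (x - (c + s • w)) = 0 := by
      rw [hx, cr_comb, cr_self, mul_zero, add_zero]
      have : cr u (a - c) = -C := by
        rw [hC, show a - c = -(c - a) from by abel, cr_neg_right]
      rw [this, hDC]
      linarith [hsDC]
    have hz2 : cr w (x - (c + s • w)) = 0 := by
      rw [hx, cr_comb, cr_self, mul_zero, sub_zero, hBA]
      have : cr w (a - c) = A := hA.symm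
      rw [this]
      linarith [htBA]
    have := eq_zero_of_two_cr huw hz1 hz2
    have := sub_eq_zero.1 this
    exact this
  have hune : u ≠ 0 := by rintro h; rw [h] at huw; exact huw (cr_zero_left w)
  have hwne : w ≠ 0 := by
    rintro h
    apply huw
    have : cr u w = cr u 0 := by rw [h]
    rw [this, cr_zero_right]
  have hxa : x ∈ segment ℝ a b := mem_seg.2 ⟨t, le_of_lt ht0, le_of_lt ht1, rfl⟩
  have hxc : x ∈ segment ℝ c d := mem_seg.2 ⟨s, le_of_lt hs0, le_of_lt hs1, hxw⟩
  refine ⟨x, ?_, ?_, ?_, ?_, ?_⟩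
  · show segment ℝ a b ∩ segment ℝ c d = {x}
    apply Set.eq_singleton_iff_unique_mem.mpr
    refine ⟨⟨hxa, hxc⟩, ?_⟩
    rintro y ⟨hy1, hy2⟩
    obtain ⟨t', _, _, rfl⟩ := mem_seg.1 hy1
    obtain ⟨s', _, _, heq'⟩ := mem_seg.1 hy2
    have hdiff1 : a + t' • u - x = (t' - t) • u := by
      rw [hx, sub_smul]; abel
    have hdiff2 : a + t' • u - x = (s' - s) • w := by
      rw [heq', hxw, sub_smul]; abel
    have hz1 : cr u (a + t' • u - x) = 0 := by
      rw [hdiff1, cr_smul_right, cr_self, mul_zero]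
    have hz2 : cr w (a + t' • u - x) = 0 := by
      rw [hdiff2, cr_smul_right, cr_self, mul_zero]
    exact sub_eq_zero.1 (eq_zero_of_two_cr huw hz1 hz2)
  · show x ≠ a
    intro h
    have : t • u = 0 := by
      have := congrArg (fun z => z - a) h
      simpa [hx] using this
    rcases smul_eq_zero.1 this with h' | h'
    · exact (ne_of_gt ht0) h'
    · exact hune h'
  · show x ≠ b
    intro h
    have hxb : x - b = (t - 1) • u := by
      rw [hx, sub_smul, one_smul, hu]; abel
    rw [h, sub_self] at hxb
    rcases smul_eq_zero.1 hxb.symm with h' | h'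
    · exact (ne_of_lt ht1) (by linarith [sub_eq_zero.1 h'])
    · exact hune h'
  · show x ≠ c
    intro h
    have : s • w = 0 := by
      have := congrArg (fun z => z - c) h
      simpa [hxw] using this
    rcases smul_eq_zero.1 this with h' | h'
    · exact (ne_of_gt hs0) h'
    · exact hwne h'
  · show x ≠ d
    intro h
    have hxd : x - d = (s - 1) • w := by
      rw [hxw, sub_smul, one_smul, hw]; abel
    rw [h, sub_self] at hxd
    rcases smul_eq_zero.1 hxd.symm with h' | h'
    · exact (ne_of_lt hs1) (by linarith [sub_eq_zero.1 h'])
    · exact hwne h'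

lemma cr_ne_of_genpos {S : Set Pl} (hgp : GenPos S) {p q r : Pl}
    (hp : p ∈ S) (hq : q ∈ S) (hr : r ∈ S)
    (hpq : p ≠ q) (hpr : p ≠ r) (hqr : q ≠ r) :
    cr (q - p) (r - p) ≠ 0 := by
  intro h
  apply hgp p hp q hq r hr hpq hpr hqr
  have hv : q - p ≠ 0 := sub_ne_zero.2 (Ne.symm hpq)
  obtain ⟨t, htr⟩ := eq_smul_of_cr_eq_zero hv h
  rw [collinear_iff_of_mem (Set.mem_insert p {q, r})]
  refine ⟨q - p, ?_⟩
  intro z hz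
  rcases hz with rfl | hz
  · exact ⟨0, by simp⟩
  rcases hz with rfl | hz
  · exact ⟨1, by simp⟩
  rcases hz with rfl
  exact ⟨t, by rw [← htr]; simp⟩

lemma not_cross_of_disjoint {s t : Seg} (h : segSet s ∩ segSet t = ∅) : ¬ Cross s t := by
  rintro ⟨x, hx, -⟩
  rw [h] at hx
  exact (Set.singleton_ne_empty x) hx.symm

lemma disjoint_of_not_cross {a b c d : Pl} (h : ¬ Cross (a, b) (c, d))
    (h1 : cr (b - a) (c - a) ≠ 0) (h2 : cr (b - a) (d - a) ≠ 0)
    (h3 : cr (d - c) (a - c) ≠ 0) (h4 : cr (d - c) (b - c) ≠ 0) :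
    segment ℝ a b ∩ segment ℝ c d = ∅ := by
  by_contra hne
  obtain ⟨y, hy1, hy2⟩ := Set.nonempty_iff_ne_empty.2 hne
  obtain ⟨hp1, hp2⟩ := products_of_common_point hy1 hy2 h1 h2 h3 h4
  exact h (cross_of_signs hp1 hp2)

open Filter Topology in
lemma pert_cross {a b c d : Pl} (v : Pl)
    (h1 : sideVal a b c * sideVal a b d < 0)
    (h2 : sideVal c d a * sideVal c d b < 0) :
    ∀ᶠ ε in 𝓝[>] (0:ℝ), Cross (a, b + ε • v) (c, d + ε • v) := by
  have hcont1 : Continuous fun ε : ℝ =>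
      sideVal a (b + ε • v) c * sideVal a (b + ε • v) (d + ε • v) := by
    simp only [sideVal, Prod.fst_add, Prod.snd_add, Prod.smul_fst, Prod.smul_snd, smul_eq_mul]
    fun_prop
  have hcont2 : Continuous fun ε : ℝ =>
      sideVal c (d + ε • v) a * sideVal c (d + ε • v) (b + ε • v) := by
    simp only [sideVal, Prod.fst_add, Prod.snd_add, Prod.smul_fst, Prod.smul_snd, smul_eq_mul]
    fun_prop
  have ht1 : Filter.Tendsto (fun ε : ℝ =>
      sideVal a (b + ε • v) c * sideVal a (b + ε • v) (d + ε • v)) (𝓝[>] (0:ℝ))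
      (𝓝 (sideVal a b c * sideVal a b d)) := by
    have := hcont1.tendsto 0
    simp only [zero_smul, add_zero] at this
    exact this.mono_left nhdsWithin_le_nhds
  have ht2 : Filter.Tendsto (fun ε : ℝ =>
      sideVal c (d + ε • v) a * sideVal c (d + ε • v) (b + ε • v)) (𝓝[>] (0:ℝ))
      (𝓝 (sideVal c d a * sideVal c d b)) := by
    have := hcont2.tendsto 0
    simp only [zero_smul, add_zero] at this
    exact this.mono_left nhdsWithin_le_nhds
  have e1 := ht1.eventually (eventually_lt_nhds h1) |>.mono (fun ε h => h)
  have e2 := ht2.eventually (eventually_lt_nhds h2) |>.mono (fun ε h => h)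
  filter_upwards [e1, e2] with ε q1 q2
  exact cross_of_signs q1 q2

open Filter Topology Metric in
lemma pert_disjoint {a b c d : Pl} (v : Pl)
    (hdis : segment ℝ a b ∩ segment ℝ c d = ∅) :
    ∀ᶠ ε in 𝓝[>] (0:ℝ),
      segment ℝ a (b + ε • v) ∩ segment ℝ c (d + ε • v) = ∅ := by
  have hcontseg : ∀ p q : Pl, IsCompact (segment ℝ p q) := by
    intro p q
    rw [segment_eq_image']
    exact isCompact_Icc.image (continuous_const.add (continuous_id.smul continuous_const))
  have hdisj : Disjoint (segment ℝ a b) (segment ℝ c d) :=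
    Set.disjoint_iff_inter_eq_empty.2 hdis
  obtain ⟨δ, hδ, hth⟩ := hdisj.exists_thickenings (hcontseg a b) (hcontseg c d).isClosed
  have hpos : (0:ℝ) < δ / (‖v‖ + 1) := by positivity
  filter_upwards [Ioo_mem_nhdsGT hpos] with ε hε
  obtain ⟨hε0, hεδ⟩ := hε
  have hbound : ∀ p q : Pl, ∀ z ∈ segment ℝ p (q + ε • v),
      z ∈ thickening δ (segment ℝ p q) := by
    intro p q z hz
    obtain ⟨t, ht0, ht1, rfl⟩ := mem_seg.1 hz
    have hrew : p + t • (q + ε • v - p) = (p + t • (q - p)) + (t * ε) • v := by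
      rw [show q + ε • v - p = (q - p) + ε • v from by abel, smul_add, smul_smul]
      abel
    rw [hrew]
    rw [mem_thickening_iff]
    refine ⟨p + t • (q - p), mem_seg.2 ⟨t, ht0, ht1, rfl⟩, ?_⟩
    rw [dist_eq_norm, show p + t • (q - p) + (t * ε) • v - (p + t • (q - p)) = (t * ε) • v
      from by abel, norm_smul]
    have : |t * ε| ≤ ε := by
      rw [abs_of_nonneg (by positivity)]
      nlinarith
    calc |t * ε| * ‖v‖ ≤ ε * ‖v‖ := by nlinarith [norm_nonneg v]
      _ ≤ ε * (‖v‖ + 1) := by nlinarith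
      _ < δ := by
        have := (lt_div_iff₀ (by positivity : (0:ℝ) < ‖v‖ + 1)).1 hεδ
        linarith
  rw [Set.eq_empty_iff_forall_notMem]
  rintro z ⟨hz1, hz2⟩
  have := Set.disjoint_iff_inter_eq_empty.1 hth
  rw [Set.eq_empty_iff_forall_notMem] at this
  exact this z ⟨hbound a b z hz1, hbound c d z hz2⟩

/-! ### Combinatorial layer -/

section Comb

variable (ε : ℝ) (v : Pl)

def eA (s : Seg) : Seg := (s.1, s.2 + ε • v)
def eB (s : Seg) : Seg := (s.2, s.1 + ε • v)
def Cl (A : Finset Seg) : Finset Seg := A.image (eA ε v) ∪ A.image (eB ε v)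

variable {ε v}

lemma eA_inj : Function.Injective (eA ε v) := by
  rintro ⟨a, b⟩ ⟨c, d⟩ h
  simp only [eA, Prod.mk.injEq] at h
  obtain ⟨h1, h2⟩ := h
  simp [h1, add_right_cancel h2]

lemma eB_inj : Function.Injective (eB ε v) := by
  rintro ⟨a, b⟩ ⟨c, d⟩ h
  simp only [eB, Prod.mk.injEq] at h
  obtain ⟨h1, h2⟩ := h
  simp [h1, add_right_cancel h2]

lemma eA_eq_eB_iff {s t : Seg} : eA ε v s = eB ε v t ↔ s.1 = t.2 ∧ s.2 = t.1 := by
  simp only [eA, eB, Prod.mk.injEq]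
  constructor
  · rintro ⟨h1, h2⟩; exact ⟨h1, add_right_cancel h2⟩
  · rintro ⟨h1, h2⟩; exact ⟨h1, by rw [h2]⟩

/-- Strong form of a red-blue perfect matching. -/
def Strong (R B : Finset Pl) (F : Finset Seg) : Prop :=
  (∀ s ∈ F, s.1 ∈ R ∧ s.2 ∈ B) ∧
  (∀ p ∈ R, ∃ s ∈ F, s.1 = p) ∧ (∀ q ∈ B, ∃ s ∈ F, s.2 = q) ∧
  (∀ s ∈ F, ∀ t ∈ F, s.1 = t.1 → s = t) ∧ (∀ s ∈ F, ∀ t ∈ F, s.2 = t.2 → s = t)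

lemma strong_isRBPM {R B : Finset Pl} {F : Finset Seg} (hRB : Disjoint R B)
    (h : Strong R B F) : IsRBPM R B F ∧ F.card = R.card := by
  obtain ⟨hend, hcovR, hcovB, hu1, hu2⟩ := h
  have hne : ∀ s ∈ F, ∀ t ∈ F, s.1 ≠ t.2 := by
    intro s hs t ht heq
    exact Finset.disjoint_left.1 hRB (hend s hs).1 (heq ▸ (hend t ht).2)
  constructor
  · refine ⟨⟨fun s hs => hne s hs s hs, ?_⟩, fun s hs => hend s hs, ?_, ?_⟩
    · intro s hs t ht hst
      rw [Set.eq_empty_iff_forall_notMem]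
      rintro z ⟨hz1, hz2⟩
      simp only [Set.mem_insert_iff, Set.mem_singleton_iff] at hz1 hz2
      rcases hz1 with rfl | rfl <;> rcases hz2 with h' | h'
      · exact hst (hu1 s hs t ht h')
      · exact hne s hs t ht h'
      · exact hne t ht s hs h'.symm
      · exact hst (hu2 s hs t ht h')
    · intro p hp
      obtain ⟨s, hs, h'⟩ := hcovR p hp
      exact ⟨s, hs, h'.symm⟩
    · intro q hq
      obtain ⟨s, hs, h'⟩ := hcovB q hq
      exact ⟨s, hs, h'.symm⟩
  · have himg : F.image (fun s => s.1) = R := by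
      apply Finset.Subset.antisymm
      · intro p hp
        obtain ⟨s, hs, rfl⟩ := Finset.mem_image.1 hp
        exact (hend s hs).1
      · intro p hp
        obtain ⟨s, hs, h'⟩ := hcovR p hp
        exact Finset.mem_image.2 ⟨s, hs, h'⟩
    rw [← himg]
    exact (Finset.card_image_of_injOn (fun s hs t ht h => hu1 s hs t ht h)).symm

lemma match_eq_of_shared {A : Finset Seg} (hA : IsMatching A) {s t : Seg}
    (hs : s ∈ A) (ht : t ∈ A)
    (h : s.1 = t.1 ∨ s.1 = t.2 ∨ s.2 = t.1 ∨ s.2 = t.2) : s = t := by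
  by_contra hst
  have h2 := hA.2 s hs t ht hst
  rw [Set.eq_empty_iff_forall_notMem] at h2
  rcases h with h' | h' | h' | h'
  · exact h2 s.1 ⟨Set.mem_insert _ _, h' ▸ Set.mem_insert _ _⟩
  · exact h2 s.1 ⟨Set.mem_insert _ _, h' ▸ Set.mem_insert_of_mem _ rfl⟩
  · exact h2 s.2 ⟨Set.mem_insert_of_mem _ rfl, h' ▸ Set.mem_insert _ _⟩
  · exact h2 s.2 ⟨Set.mem_insert_of_mem _ rfl, h' ▸ Set.mem_insert_of_mem _ rfl⟩

lemma cl_strong {P' : Finset Pl} {A : Finset Seg} (hA : IsPM P' A) :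
    Strong P' (P'.image (fun p => p + ε • v)) (Cl ε v A) := by
  obtain ⟨hM, hend, hcov⟩ := hA
  have memA : ∀ z ∈ Cl ε v A, (∃ s ∈ A, eA ε v s = z) ∨ ∃ s ∈ A, eB ε v s = z := by
    intro z hz
    rcases Finset.mem_union.1 hz with h | h
    · exact Or.inl (Finset.mem_image.1 h)
    · exact Or.inr (Finset.mem_image.1 h)
  refine ⟨?_, ?_, ?_, ?_, ?_⟩
  · intro z hz
    rcases memA z hz with ⟨s, hs, rfl⟩ | ⟨s, hs, rfl⟩
    · exact ⟨(hend s hs).1, Finset.mem_image.2 ⟨s.2, (hend s hs).2, rfl⟩⟩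
    · exact ⟨(hend s hs).2, Finset.mem_image.2 ⟨s.1, (hend s hs).1, rfl⟩⟩
  · intro p hp
    obtain ⟨s, hs, hps⟩ := hcov p hp
    rcases hps with rfl | rfl
    · exact ⟨eA ε v s, Finset.mem_union_left _ (Finset.mem_image_of_mem _ hs), rfl⟩
    · exact ⟨eB ε v s, Finset.mem_union_right _ (Finset.mem_image_of_mem _ hs), rfl⟩
  · intro q hq
    obtain ⟨p, hp, rfl⟩ := Finset.mem_image.1 hq
    obtain ⟨s, hs, hps⟩ := hcov p hp
    rcases hps with rfl | rfl
    · exact ⟨eB ε v s, Finset.mem_union_right _ (Finset.mem_image_of_mem _ hs), rfl⟩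
    · exact ⟨eA ε v s, Finset.mem_union_left _ (Finset.mem_image_of_mem _ hs), rfl⟩
  · intro z hz w hw hzw
    rcases memA z hz with ⟨s, hs, rfl⟩ | ⟨s, hs, rfl⟩ <;>
      rcases memA w hw with ⟨t, ht, rfl⟩ | ⟨t, ht, rfl⟩ <;>
      simp only [eA, eB] at hzw ⊢
    · rw [match_eq_of_shared hM hs ht (Or.inl hzw)]
    · exact absurd (match_eq_of_shared hM hs ht (Or.inr (Or.inl hzw)) ▸ hzw)
        (hM.1 s hs)
    · exact absurd (match_eq_of_shared hM hs ht (Or.inr (Or.inr (Or.inl hzw))) ▸ hzw).symm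
        (hM.1 t ht)
    · rw [match_eq_of_shared hM hs ht (Or.inr (Or.inr (Or.inr hzw)))]
  · intro z hz w hw hzw
    rcases memA z hz with ⟨s, hs, rfl⟩ | ⟨s, hs, rfl⟩ <;>
      rcases memA w hw with ⟨t, ht, rfl⟩ | ⟨t, ht, rfl⟩ <;>
      simp only [eA, eB] at hzw ⊢ <;>
      have hzw' := add_right_cancel hzw
    · rw [match_eq_of_shared hM hs ht (Or.inr (Or.inr (Or.inr hzw')))]
    · exact absurd (match_eq_of_shared hM hs ht (Or.inr (Or.inr (Or.inl hzw'))) ▸ hzw').symm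
        (hM.1 t ht)
    · exact absurd (match_eq_of_shared hM hs ht (Or.inr (Or.inl hzw')) ▸ hzw')
        (hM.1 s hs)
    · rw [match_eq_of_shared hM hs ht (Or.inl hzw')]

lemma strong_swap {R B : Finset Pl} {F : Finset Seg} (h : Strong R B F) {x y : Seg}
    (hx : x ∈ F) (hy : y ∈ F) (hxy : x ≠ y) :
    Strong R B ((F \ {x, y}) ∪ {(x.1, y.2), (y.1, x.2)}) := by
  obtain ⟨hend, hcovR, hcovB, hu1, hu2⟩ := h
  have memF' : ∀ z, z ∈ (F \ {x, y}) ∪ {(x.1, y.2), (y.1, x.2)} ↔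
      (z ∈ F ∧ z ≠ x ∧ z ≠ y) ∨ z = (x.1, y.2) ∨ z = (y.1, x.2) := by
    intro z
    simp [Finset.mem_union, Finset.mem_sdiff, Finset.mem_insert, Finset.mem_singleton,
      not_or]
    tauto
  refine ⟨?_, ?_, ?_, ?_, ?_⟩
  · intro z hz
    rcases (memF' z).1 hz with ⟨hzF, _, _⟩ | rfl | rfl
    · exact hend z hzF
    · exact ⟨(hend x hx).1, (hend y hy).2⟩
    · exact ⟨(hend y hy).1, (hend x hx).2⟩
  · intro p hp
    obtain ⟨s, hs, hsp⟩ := hcovR p hp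
    by_cases hsx : s = x
    · exact ⟨(x.1, y.2), (memF' _).2 (Or.inr (Or.inl rfl)), by rw [← hsx]; exact hsp⟩
    by_cases hsy : s = y
    · exact ⟨(y.1, x.2), (memF' _).2 (Or.inr (Or.inr rfl)), by rw [← hsy]; exact hsp⟩
    · exact ⟨s, (memF' _).2 (Or.inl ⟨hs, hsx, hsy⟩), hsp⟩
  · intro q hq
    obtain ⟨s, hs, hsq⟩ := hcovB q hq
    by_cases hsx : s = x
    · exact ⟨(y.1, x.2), (memF' _).2 (Or.inr (Or.inr rfl)), by rw [← hsx]; exact hsq⟩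
    by_cases hsy : s = y
    · exact ⟨(x.1, y.2), (memF' _).2 (Or.inr (Or.inl rfl)), by rw [← hsy]; exact hsq⟩
    · exact ⟨s, (memF' _).2 (Or.inl ⟨hs, hsx, hsy⟩), hsq⟩
  · intro z hz w hw hzw
    have hxyn : x.1 ≠ y.1 := fun h => hxy (hu1 x hx y hy h)
    rcases (memF' z).1 hz with ⟨hzF, hzx, hzy⟩ | rfl | rfl <;>
      rcases (memF' w).1 hw with ⟨hwF, hwx, hwy⟩ | rfl | rfl
    · exact hu1 z hzF w hwF hzw
    · exact absurd (hu1 z hzF x hx hzw) hzx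
    · exact absurd (hu1 z hzF y hy hzw) hzy
    · exact absurd (hu1 x hx w hwF hzw) (Ne.symm hwx)
    · rfl
    · exact absurd hzw hxyn
    · exact absurd (hu1 y hy w hwF hzw) (Ne.symm hwy)
    · exact absurd hzw.symm hxyn
    · rfl
  · intro z hz w hw hzw
    have hxyn : x.2 ≠ y.2 := fun h => hxy (hu2 x hx y hy h)
    rcases (memF' z).1 hz with ⟨hzF, hzx, hzy⟩ | rfl | rfl <;>
      rcases (memF' w).1 hw with ⟨hwF, hwx, hwy⟩ | rfl | rfl
    · exact hu2 z hzF w hwF hzw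
    · exact absurd (hu2 z hzF y hy hzw) hzy
    · exact absurd (hu2 z hzF x hx hzw) hzx
    · exact absurd (hu2 y hy w hwF hzw) (Ne.symm hwy)
    · rfl
    · exact absurd hzw.symm hxyn
    · exact absurd (hu2 x hx w hwF hzw) (Ne.symm hwx)
    · exact absurd hzw hxyn
    · rfl

lemma not_cross_self (s : Seg) : ¬ Cross s s := by
  rintro ⟨x, hx, hx1, -⟩
  apply hx1
  have : s.1 ∈ segSet s ∩ segSet s := ⟨left_mem_segment ℝ s.1 s.2, left_mem_segment ℝ s.1 s.2⟩
  rw [hx] at this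
  exact (Set.mem_singleton_iff.1 this).symm

lemma sdiff_union_pair {X1 X2 T1 T2 : Finset Seg}
    (h1 : ∀ z ∈ X1, z ∉ T2) (h2 : ∀ z ∈ X2, z ∉ T1) :
    (X1 \ T1) ∪ (X2 \ T2) = (X1 ∪ X2) \ (T1 ∪ T2) := by
  ext z
  simp only [Finset.mem_union, Finset.mem_sdiff]
  constructor
  · rintro (⟨hz, hn⟩ | ⟨hz, hn⟩)
    · exact ⟨Or.inl hz, by rintro (h | h); exact hn h; exact h1 z hz h⟩
    · exact ⟨Or.inr hz, by rintro (h | h); exact h2 z hz h; exact hn h⟩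
  · rintro ⟨hz | hz, hn⟩
    · exact Or.inl ⟨hz, fun h => hn (Or.inl h)⟩
    · exact Or.inr ⟨hz, fun h => hn (Or.inr h)⟩

lemma step2_eq {S T1 T2 U U2 : Finset Seg} (hdisj : ∀ z ∈ U, z ∉ T2) :
    (((S \ T1) ∪ U) \ T2) ∪ U2 = (S \ (T1 ∪ T2)) ∪ (U ∪ U2) := by
  ext z
  simp only [Finset.mem_union, Finset.mem_sdiff]
  constructor
  · rintro (⟨hz | hz, hn⟩ | hz)
    · exact Or.inl ⟨hz.1, by rintro (h | h); exact hz.2 h; exact hn h⟩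
    · exact Or.inr (Or.inl hz)
    · exact Or.inr (Or.inr hz)
  · rintro (⟨hz, hn⟩ | hz | hz)
    · exact Or.inl ⟨Or.inl ⟨hz, fun h => hn (Or.inl h)⟩, fun h => hn (Or.inr h)⟩
    · exact Or.inl ⟨Or.inr hz, hdisj z hz⟩
    · exact Or.inr hz

lemma cl_update {Mold : Finset Seg} (hM : IsMatching Mold) {s13 s24 : Seg}
    (h13 : s13 ∈ Mold) (h24 : s24 ∈ Mold)
    (hsw13 : (s13.2, s13.1) ∉ Mold) (hsw24 : (s24.2, s24.1) ∉ Mold) (w1 w2 : Seg) :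
    Cl ε v ((Mold \ {s13, s24}) ∪ {w1, w2}) =
      (Cl ε v Mold \ {eA ε v s13, eA ε v s24, eB ε v s13, eB ε v s24}) ∪
        {eA ε v w1, eA ε v w2, eB ε v w1, eB ε v w2} := by
  have hAB : ∀ z ∈ Mold.image (eA ε v), z ∉ ({s13, s24} : Finset Seg).image (eB ε v) := by
    intro z hz hz'
    obtain ⟨s, hs, rfl⟩ := Finset.mem_image.1 hz
    obtain ⟨t, ht, heq⟩ := Finset.mem_image.1 hz'
    obtain ⟨e1, e2⟩ := eA_eq_eB_iff.1 heq.symm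
    have hts : s = (t.2, t.1) := Prod.ext e1 e2
    rcases Finset.mem_insert.1 ht with rfl | ht'
    · exact hsw13 (hts ▸ hs)
    · rw [Finset.mem_singleton] at ht'
      subst ht'
      exact hsw24 (hts ▸ hs)
  have hBA : ∀ z ∈ Mold.image (eB ε v), z ∉ ({s13, s24} : Finset Seg).image (eA ε v) := by
    intro z hz hz'
    obtain ⟨s, hs, rfl⟩ := Finset.mem_image.1 hz
    obtain ⟨t, ht, heq⟩ := Finset.mem_image.1 hz'
    obtain ⟨e1, e2⟩ := eA_eq_eB_iff.1 heq
    have hts : s = (t.2, t.1) := Prod.ext e2.symm e1.symm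
    rcases Finset.mem_insert.1 ht with rfl | ht'
    · exact hsw13 (hts ▸ hs)
    · rw [Finset.mem_singleton] at ht'
      subst ht'
      exact hsw24 (hts ▸ hs)
  have expand : Cl ε v ((Mold \ {s13, s24}) ∪ {w1, w2}) =
      ((Mold.image (eA ε v) \ ({s13, s24} : Finset Seg).image (eA ε v)) ∪
        (Mold.image (eB ε v) \ ({s13, s24} : Finset Seg).image (eB ε v))) ∪
      (({w1, w2} : Finset Seg).image (eA ε v) ∪ ({w1, w2} : Finset Seg).image (eB ε v)) := by
    unfold Cl
    rw [Finset.image_union, Finset.image_union,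
      Finset.image_sdiff _ _ eA_inj, Finset.image_sdiff _ _ eB_inj]
    ext z
    simp only [Finset.mem_union, Finset.mem_sdiff]
    tauto
  rw [expand, sdiff_union_pair hAB hBA]
  have h1 : Mold.image (eA ε v) ∪ Mold.image (eB ε v) = Cl ε v Mold := rfl
  rw [h1]
  have h2 : ({s13, s24} : Finset Seg).image (eA ε v) ∪
      ({s13, s24} : Finset Seg).image (eB ε v) =
      {eA ε v s13, eA ε v s24, eB ε v s13, eB ε v s24} := by
    ext z
    simp only [Finset.mem_union, Finset.mem_image, Finset.mem_insert, Finset.mem_singleton]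
    constructor
    · rintro (⟨t, (rfl | rfl), rfl⟩ | ⟨t, (rfl | rfl), rfl⟩)
      · exact Or.inl rfl
      · exact Or.inr (Or.inl rfl)
      · exact Or.inr (Or.inr (Or.inl rfl))
      · exact Or.inr (Or.inr (Or.inr rfl))
    · rintro (rfl | rfl | rfl | rfl)
      · exact Or.inl ⟨s13, Or.inl rfl, rfl⟩
      · exact Or.inl ⟨s24, Or.inr rfl, rfl⟩
      · exact Or.inr ⟨s13, Or.inl rfl, rfl⟩
      · exact Or.inr ⟨s24, Or.inr rfl, rfl⟩
  have h3 : ({w1, w2} : Finset Seg).image (eA ε v) ∪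
      ({w1, w2} : Finset Seg).image (eB ε v) =
      {eA ε v w1, eA ε v w2, eB ε v w1, eB ε v w2} := by
    ext z
    simp only [Finset.mem_union, Finset.mem_image, Finset.mem_insert, Finset.mem_singleton]
    constructor
    · rintro (⟨t, (rfl | rfl), rfl⟩ | ⟨t, (rfl | rfl), rfl⟩)
      · exact Or.inl rfl
      · exact Or.inr (Or.inl rfl)
      · exact Or.inr (Or.inr (Or.inl rfl))
      · exact Or.inr (Or.inr (Or.inr rfl))
    · rintro (rfl | rfl | rfl | rfl)
      · exact Or.inl ⟨w1, Or.inl rfl, rfl⟩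
      · exact Or.inl ⟨w2, Or.inr rfl, rfl⟩
      · exact Or.inr ⟨w1, Or.inl rfl, rfl⟩
      · exact Or.inr ⟨w2, Or.inr rfl, rfl⟩
  rw [h2, h3]

end Comb

open Filter Topology in
lemma pert_cross_of_genpos {S : Set Pl} (hgp : GenPos S) (v : Pl) {a b c d : Pl}
    (ha : a ∈ S) (hb : b ∈ S) (hc : c ∈ S) (hd : d ∈ S)
    (hab : a ≠ b) (hac : a ≠ c) (had : a ≠ d) (hbc : b ≠ c) (hbd : b ≠ d) (hcd : c ≠ d)
    {y : Pl} (hy1 : y ∈ segment ℝ a b) (hy2 : y ∈ segment ℝ c d) :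
    ∀ᶠ ε in 𝓝[>] (0:ℝ), Cross (a, b + ε • v) (c, d + ε • v) := by
  have h1 := cr_ne_of_genpos hgp ha hb hc hab hac hbc
  have h2 := cr_ne_of_genpos hgp ha hb hd hab had hbd
  have h3 := cr_ne_of_genpos hgp hc hd ha hcd hac.symm had.symm
  have h4 := cr_ne_of_genpos hgp hc hd hb hcd hbc.symm hbd.symm
  obtain ⟨hp1, hp2⟩ := products_of_common_point hy1 hy2 h1 h2 h3 h4
  exact pert_cross v hp1 hp2

lemma seg_disj_of_genpos {S : Set Pl} (hgp : GenPos S) {a b c d : Pl}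
    (ha : a ∈ S) (hb : b ∈ S) (hc : c ∈ S) (hd : d ∈ S)
    (hab : a ≠ b) (hac : a ≠ c) (had : a ≠ d) (hbc : b ≠ c) (hbd : b ≠ d) (hcd : c ≠ d)
    (h : ¬ Cross (a, b) (c, d)) :
    segment ℝ a b ∩ segment ℝ c d = ∅ := by
  have h1 := cr_ne_of_genpos hgp ha hb hc hab hac hbc
  have h2 := cr_ne_of_genpos hgp ha hb hd hab had hbd
  have h3 := cr_ne_of_genpos hgp hc hd ha hcd hac.symm had.symm
  have h4 := cr_ne_of_genpos hgp hc hd hb hcd hbc.symm hbd.symm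
  exact disjoint_of_not_cross h h1 h2 h3 h4

open Filter Topology in
lemma pert_noncross {a b c d : Pl} (v : Pl)
    (hdis : segment ℝ a b ∩ segment ℝ c d = ∅) :
    ∀ᶠ ε in 𝓝[>] (0:ℝ), ¬ Cross (a, b + ε • v) (c, d + ε • v) := by
  filter_upwards [pert_disjoint v hdis] with ε h
  exact not_cross_of_disjoint h

open Filter Topology in
lemma ev_ne (c : ℝ) : ∀ᶠ ε in 𝓝[>] (0:ℝ), ε ≠ c := by
  rcases le_or_gt c 0 with h | h
  · filter_upwards [self_mem_nhdsWithin] with ε hε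
    intro rfl'
    rw [Set.mem_Ioi] at hε
    linarith [rfl' ▸ hε]
  · filter_upwards [Ioo_mem_nhdsGT h] with ε hε
    exact ne_of_lt hε.2

/-- Facts about the four endpoints of a crossing pair in a matching. -/
lemma quad_facts {P' : Finset Pl} {A : Finset Seg} (hA : IsPM P' A) {a b c d : Pl}
    (h1 : (a, c) ∈ A) (h2 : (b, d) ∈ A) (hcr : Cross (a, c) (b, d)) :
    (a ∈ P' ∧ b ∈ P' ∧ c ∈ P' ∧ d ∈ P') ∧
    (a ≠ b ∧ a ≠ c ∧ a ≠ d ∧ b ≠ c ∧ b ≠ d ∧ c ≠ d) ∧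
    ((c, a) ∉ A ∧ (d, b) ∉ A) := by
  obtain ⟨hM, hend, -⟩ := hA
  have hne : (a, c) ≠ (b, d) := by
    rintro h; rw [h] at hcr; exact not_cross_self _ hcr
  have hdisj := hM.2 _ h1 _ h2 hne
  rw [Set.eq_empty_iff_forall_notMem] at hdisj
  have hab : a ≠ b := fun h =>
    hdisj a ⟨Set.mem_insert _ _, h ▸ Set.mem_insert _ _⟩
  have had : a ≠ d := fun h =>
    hdisj a ⟨Set.mem_insert _ _, h ▸ Set.mem_insert_of_mem _ rfl⟩
  have hcb : c ≠ b := fun h =>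
    hdisj c ⟨Set.mem_insert_of_mem _ rfl, h ▸ Set.mem_insert _ _⟩
  have hcd : c ≠ d := fun h =>
    hdisj c ⟨Set.mem_insert_of_mem _ rfl, h ▸ Set.mem_insert_of_mem _ rfl⟩
  have hac : a ≠ c := hM.1 _ h1
  have hbd : b ≠ d := hM.1 _ h2
  refine ⟨⟨(hend _ h1).1, (hend _ h2).1, (hend _ h1).2, (hend _ h2).2⟩,
    ⟨hab, hac, had, hcb.symm, hbd, hcd⟩, ?_, ?_⟩
  · intro hmem
    have : (c, a) = (a, c) := match_eq_of_shared hM hmem h1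
      (Or.inr (Or.inl rfl))
    simp only [Prod.mk.injEq] at this
    exact hac this.2
  · intro hmem
    have : (d, b) = (b, d) := match_eq_of_shared hM hmem h2
      (Or.inr (Or.inl rfl))
    simp only [Prod.mk.injEq] at this
    exact hbd this.2

lemma pair_union_eq (a b c d : Seg) : ({a, b} : Finset Seg) ∪ {c, d} = {a, b, c, d} := by
  ext z
  simp only [Finset.mem_union, Finset.mem_insert, Finset.mem_singleton]
  tauto

lemma quad_perm1 (a b c d : Seg) : ({a, b, c, d} : Finset Seg) = {a, b, d, c} := by
  ext z
  simp only [Finset.mem_insert, Finset.mem_singleton]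
  tauto

lemma quad_perm2 (a b c d : Seg) : ({a, d, b, c} : Finset Seg) = {a, b, c, d} := by
  ext z
  simp only [Finset.mem_insert, Finset.mem_singleton]
  tauto

lemma quad_perm3 (a b c d : Seg) : ({a, d, c, b} : Finset Seg) = {a, b, c, d} := by
  ext z
  simp only [Finset.mem_insert, Finset.mem_singleton]
  tauto

open Filter Topology in
theorem stmt15' (n m : ℕ) (P : Finset Pl) (hP : P.card = 2 * n) (hgp : GenPos (P : Set Pl))
    (M : Fin (m + 1) → Finset Seg)
    (hpm : ∀ i, IsPM P (M i) ∧ (M i).card = n)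
    (hflip : ∀ i : Fin m, IsFlip (M i.castSucc) (M i.succ)) :
    ∃ (R B : Finset Pl) (N : Fin (2 * m + 1) → Finset Seg),
      R.card = 2 * n ∧ B.card = 2 * n ∧ Disjoint R B ∧
      (∀ j, IsRBPM R B (N j) ∧ (N j).card = 2 * n) ∧
      ∀ j : Fin (2 * m), IsRBFlip (N j.castSucc) (N j.succ) := by
  classical
  choose q1 q2 q3 q4 hq using hflip
  set v : Pl := ((1 : ℝ), (0 : ℝ)) with hv
  have hcr : ∀ i, Cross (q1 i, q3 i) (q2 i, q4 i) := fun i => (hq i).1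
  have h13 : ∀ i, (q1 i, q3 i) ∈ M i.castSucc := fun i => (hq i).2.1
  have h24 : ∀ i, (q2 i, q4 i) ∈ M i.castSucc := fun i => (hq i).2.2.1
  set CL : Fin m → Prop := fun i =>
    ¬Cross (q1 i, q4 i) (q2 i, q3 i) ∧
      M i.succ = (M i.castSucc \ {(q1 i, q3 i), (q2 i, q4 i)}) ∪
        {(q1 i, q4 i), (q2 i, q3 i)} with hCL
  have hcase : ∀ i, CL i ∨
      (¬Cross (q1 i, q2 i) (q3 i, q4 i) ∧
        M i.succ = (M i.castSucc \ {(q1 i, q3 i), (q2 i, q4 i)}) ∪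
          {(q1 i, q2 i), (q3 i, q4 i)}) := fun i => (hq i).2.2.2
  have hQF := fun i => quad_facts (hpm i.castSucc).1 (h13 i) (h24 i) (hcr i)
  -- common point of the two crossing segments
  have hpt : ∀ i, ∃ y, y ∈ segment ℝ (q1 i) (q3 i) ∧ y ∈ segment ℝ (q2 i) (q4 i) := by
    intro i
    obtain ⟨x, hx, -, -, -, -⟩ := hcr i
    have hxx : x ∈ segSet (q1 i, q3 i) ∩ segSet (q2 i, q4 i) := by
      rw [hx]; exact Set.mem_singleton x
    exact ⟨x, hxx.1, hxx.2⟩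
  -- eventual conditions for each flip
  have hEv : ∀ i : Fin m, ∀ᶠ ε in 𝓝[>] (0:ℝ),
      (Cross (q1 i, q3 i + ε • v) (q2 i, q4 i + ε • v) ∧
       Cross (q3 i, q1 i + ε • v) (q4 i, q2 i + ε • v) ∧
       Cross (q1 i, q3 i + ε • v) (q4 i, q2 i + ε • v) ∧
       Cross (q3 i, q1 i + ε • v) (q2 i, q4 i + ε • v)) ∧
      (CL i → (¬ Cross (q1 i, q4 i + ε • v) (q2 i, q3 i + ε • v) ∧
               ¬ Cross (q3 i, q2 i + ε • v) (q4 i, q1 i + ε • v))) ∧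
      (¬ CL i → (¬ Cross (q1 i, q2 i + ε • v) (q4 i, q3 i + ε • v) ∧
               ¬ Cross (q3 i, q4 i + ε • v) (q2 i, q1 i + ε • v))) := by
    intro i
    obtain ⟨⟨hm1, hm2, hm3, hm4⟩, ⟨d12, d13, d14, d23, d24, d34⟩, hsw1, hsw2⟩ := hQF i
    obtain ⟨y, hy1, hy2⟩ := hpt i
    have hm1' : q1 i ∈ (P : Set Pl) := hm1
    have hm2' : q2 i ∈ (P : Set Pl) := hm2
    have hm3' : q3 i ∈ (P : Set Pl) := hm3
    have hm4' : q4 i ∈ (P : Set Pl) := hm4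
    have hy1' : y ∈ segment ℝ (q3 i) (q1 i) := by rw [segment_symm]; exact hy1
    have hy2' : y ∈ segment ℝ (q4 i) (q2 i) := by rw [segment_symm]; exact hy2
    have hc1 := pert_cross_of_genpos hgp v hm1' hm3' hm2' hm4'
      d13 d12 d14 d23.symm d34 d24 hy1 hy2
    have hc2 := pert_cross_of_genpos hgp v hm3' hm1' hm4' hm2'
      d13.symm d34 d23.symm d14 d12 d24.symm hy1' hy2'
    have hc3 := pert_cross_of_genpos hgp v hm1' hm3' hm4' hm2'
      d13 d14 d12 d34 d23.symm d24.symm hy1 hy2'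
    have hc4 := pert_cross_of_genpos hgp v hm3' hm1' hm2' hm4'
      d13.symm d23.symm d34 d12 d14 d24 hy1' hy2
    have hNC : ∀ᶠ ε in 𝓝[>] (0:ℝ),
        (CL i → (¬ Cross (q1 i, q4 i + ε • v) (q2 i, q3 i + ε • v) ∧
                 ¬ Cross (q3 i, q2 i + ε • v) (q4 i, q1 i + ε • v))) ∧
        (¬ CL i → (¬ Cross (q1 i, q2 i + ε • v) (q4 i, q3 i + ε • v) ∧
                 ¬ Cross (q3 i, q4 i + ε • v) (q2 i, q1 i + ε • v))) := by
      by_cases hC : CL i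
      · have hdis : segment ℝ (q1 i) (q4 i) ∩ segment ℝ (q2 i) (q3 i) = ∅ :=
          seg_disj_of_genpos hgp hm1' hm4' hm2' hm3'
            d14 d12 d13 d24.symm d34.symm d23 hC.1
        have hdis2 : segment ℝ (q3 i) (q2 i) ∩ segment ℝ (q4 i) (q1 i) = ∅ := by
          rw [segment_symm (𝕜 := ℝ) (q3 i) (q2 i), segment_symm (𝕜 := ℝ) (q4 i) (q1 i),
            Set.inter_comm]
          exact hdis
        filter_upwards [pert_noncross v hdis, pert_noncross v hdis2] with ε e1 e2
        exact ⟨fun _ => ⟨e1, e2⟩, fun h => absurd hC h⟩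
      · obtain ⟨hnc, -⟩ := (hcase i).resolve_left hC
        have hdis : segment ℝ (q1 i) (q2 i) ∩ segment ℝ (q3 i) (q4 i) = ∅ :=
          seg_disj_of_genpos hgp hm1' hm2' hm3' hm4'
            d12 d13 d14 d23 d24 d34 hnc
        have hdisA : segment ℝ (q1 i) (q2 i) ∩ segment ℝ (q4 i) (q3 i) = ∅ := by
          rw [segment_symm (𝕜 := ℝ) (q4 i) (q3 i)]; exact hdis
        have hdisB : segment ℝ (q3 i) (q4 i) ∩ segment ℝ (q2 i) (q1 i) = ∅ := by
          rw [segment_symm (𝕜 := ℝ) (q2 i) (q1 i), Set.inter_comm]; exact hdis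
        filter_upwards [pert_noncross v hdisA, pert_noncross v hdisB] with ε e1 e2
        exact ⟨fun h => absurd h hC, fun _ => ⟨e1, e2⟩⟩
    filter_upwards [hc1, hc2, hc3, hc4, hNC] with ε e1 e2 e3 e4 e5
    exact ⟨⟨e1, e2, e3, e4⟩, e5⟩
  -- separation of the duplicated points
  have hsep : ∀ᶠ ε in 𝓝[>] (0:ℝ), ∀ p ∈ P, ∀ q ∈ P, p + ε • v ≠ q := by
    rw [Filter.eventually_all_finset]
    intro p _
    rw [Filter.eventually_all_finset]
    intro q _
    filter_upwards [ev_ne (q.1 - p.1)] with ε hε heq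
    apply hε
    have h1 := congrArg Prod.fst heq
    simp only [Prod.fst_add, Prod.smul_fst, hv, smul_eq_mul, mul_one] at h1
    linarith
  obtain ⟨ε, hQall, hsep'⟩ := ((Filter.eventually_all.2 hEv).and hsep).exists
  -- the duplicated configuration
  set B' : Finset Pl := P.image (fun p => p + ε • v) with hB'
  have hβinj : Function.Injective (fun p : Pl => p + ε • v) := add_left_injective _
  have hDisj : Disjoint P B' := by
    rw [Finset.disjoint_left]
    intro p hp hq
    obtain ⟨r, hr, hrp⟩ := Finset.mem_image.1 hq
    exact hsep' r hr p hp hrp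
  have hBcard : B'.card = 2 * n := by
    rw [hB', Finset.card_image_of_injective _ hβinj, hP]
  set Mid : Fin m → Finset Seg := fun i =>
    if CL i then
      (Cl ε v (M i.castSucc) \ {eA ε v (q1 i, q3 i), eA ε v (q2 i, q4 i)}) ∪
        {(q1 i, q4 i + ε • v), (q2 i, q3 i + ε • v)}
    else
      (Cl ε v (M i.castSucc) \ {eA ε v (q1 i, q3 i), eB ε v (q2 i, q4 i)}) ∪
        {(q1 i, q2 i + ε • v), (q4 i, q3 i + ε • v)} with hMid
  set N' : Fin (2 * m + 1) → Finset Seg := fun j =>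
    if h2 : j.val % 2 = 0 then Cl ε v (M ⟨j.val / 2, by have := j.isLt; omega⟩)
    else Mid ⟨j.val / 2, by have := j.isLt; omega⟩ with hN'
  have hNeven : ∀ (k : Fin (2 * m + 1)), k.val % 2 = 0 → ∀ (i' : Fin (m + 1)),
      2 * i'.val = k.val → N' k = Cl ε v (M i') := by
    intro k hk i' hi'
    rw [hN']
    simp only
    rw [dif_pos hk]
    congr 2
    apply Fin.ext
    simp only
    omega
  have hNodd : ∀ (k : Fin (2 * m + 1)), k.val % 2 = 1 → ∀ (i' : Fin m),
      2 * i'.val + 1 = k.val → N' k = Mid i' := by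
    intro k hk i' hi'
    rw [hN']
    simp only
    rw [dif_neg (by omega)]
    congr 1
    apply Fin.ext
    simp only
    omega
  have hStrongMid : ∀ i : Fin m, Strong P B' (Mid i) := by
    intro i
    obtain ⟨-, ⟨d12, d13, d14, d23, d24, d34⟩, -, -⟩ := hQF i
    rw [hMid]
    simp only
    by_cases hC : CL i
    · rw [if_pos hC]
      exact strong_swap (cl_strong (hpm i.castSucc).1)
        (Finset.mem_union_left _ (Finset.mem_image_of_mem _ (h13 i)))
        (Finset.mem_union_left _ (Finset.mem_image_of_mem _ (h24 i)))
        (fun h => d12 (congrArg Prod.fst h))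
    · rw [if_neg hC]
      exact strong_swap (cl_strong (hpm i.castSucc).1)
        (Finset.mem_union_left _ (Finset.mem_image_of_mem _ (h13 i)))
        (Finset.mem_union_right _ (Finset.mem_image_of_mem _ (h24 i)))
        (fun h => d14 (congrArg Prod.fst h))
  refine ⟨P, B', N', hP, hBcard, hDisj, ?_, ?_⟩
  · intro j
    by_cases hj : j.val % 2 = 0
    · rw [hNeven j hj ⟨j.val / 2, by have := j.isLt; omega⟩ (by simp only; omega)]
      have := strong_isRBPM hDisj
        (cl_strong (ε := ε) (v := v) (hpm ⟨j.val / 2, by have := j.isLt; omega⟩).1)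
      exact ⟨this.1, by rw [this.2, hP]⟩
    · rw [hNodd j (by omega) ⟨j.val / 2, by have := j.isLt; omega⟩ (by simp only; omega)]
      have := strong_isRBPM hDisj (hStrongMid ⟨j.val / 2, by have := j.isLt; omega⟩)
      exact ⟨this.1, by rw [this.2, hP]⟩
  · intro j
    by_cases hj : j.val % 2 = 0
    · -- first half of a simulated flip
      set i : Fin m := ⟨j.val / 2, by have := j.isLt; omega⟩ with hi
      have hic : (i.castSucc : Fin (m + 1)).val = j.val / 2 := rfl
      have e1 : N' j.castSucc = Cl ε v (M i.castSucc) :=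
        hNeven j.castSucc (by simp [Fin.coe_castSucc]; omega) i.castSucc (by
          simp only [Fin.coe_castSucc, hi]; omega)
      have e2 : N' j.succ = Mid i :=
        hNodd j.succ (by simp [Fin.val_succ]; omega) i (by
          simp only [Fin.val_succ, hi]; omega)
      obtain ⟨⟨c1, c2, c3, c4⟩, ncl, ncr⟩ := hQall i
      by_cases hC : CL i
      · refine ⟨q1 i, q3 i + ε • v, q2 i, q4 i + ε • v, c1, ?_, ?_, (ncl hC).1, ?_⟩
        · rw [e1]
          exact Finset.mem_union_left _ (Finset.mem_image_of_mem _ (h13 i))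
        · rw [e1]
          exact Finset.mem_union_left _ (Finset.mem_image_of_mem _ (h24 i))
        · rw [e2, e1, hMid]
          simp only
          rw [if_pos hC]
          rfl
      · refine ⟨q1 i, q3 i + ε • v, q4 i, q2 i + ε • v, c3, ?_, ?_, (ncr hC).1, ?_⟩
        · rw [e1]
          exact Finset.mem_union_left _ (Finset.mem_image_of_mem _ (h13 i))
        · rw [e1]
          exact Finset.mem_union_right _ (Finset.mem_image_of_mem _ (h24 i))
        · rw [e2, e1, hMid]
          simp only
          rw [if_neg hC]
          rfl
    · -- second half of a simulated flip
      set i : Fin m := ⟨j.val / 2, by have := j.isLt; omega⟩ with hi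
      obtain ⟨-, ⟨d12, d13, d14, d23, d24, d34⟩, hsw1, hsw2⟩ := hQF i
      have e1 : N' j.castSucc = Mid i :=
        hNodd j.castSucc (by simp [Fin.coe_castSucc]; omega) i (by
          simp only [Fin.coe_castSucc, hi]; omega)
      have e2 : N' j.succ = Cl ε v (M i.succ) :=
        hNeven j.succ (by simp [Fin.val_succ]; omega) i.succ (by
          simp only [Fin.val_succ, hi]; omega)
      obtain ⟨⟨c1, c2, c3, c4⟩, ncl, ncr⟩ := hQall i
      have hMatch : IsMatching (M i.castSucc) := (hpm i.castSucc).1.1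
      by_cases hC : CL i
      · refine ⟨q3 i, q1 i + ε • v, q4 i, q2 i + ε • v, c2, ?_, ?_, (ncl hC).2, ?_⟩
        · rw [e1, hMid]
          simp only
          rw [if_pos hC]
          apply Finset.mem_union_left
          rw [Finset.mem_sdiff]
          refine ⟨Finset.mem_union_right _ (Finset.mem_image_of_mem _ (h13 i)), ?_⟩
          simp only [Finset.mem_insert, Finset.mem_singleton]
          push_neg
          exact ⟨fun h => d13 (congrArg Prod.fst h).symm,
                 fun h => d23 (congrArg Prod.fst h).symm⟩
        · rw [e1, hMid]
          simp only
          rw [if_pos hC]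
          apply Finset.mem_union_left
          rw [Finset.mem_sdiff]
          refine ⟨Finset.mem_union_right _ (Finset.mem_image_of_mem _ (h24 i)), ?_⟩
          simp only [Finset.mem_insert, Finset.mem_singleton]
          push_neg
          exact ⟨fun h => d14 (congrArg Prod.fst h).symm,
                 fun h => d24 (congrArg Prod.fst h).symm⟩
        · rw [e2, e1, hC.2, cl_update hMatch (h13 i) (h24 i) hsw1 hsw2, hMid]
          simp only
          rw [if_pos hC]
          rw [step2_eq (by
            intro z hz hz2
            simp only [Finset.mem_insert, Finset.mem_singleton] at hz hz2
            rcases hz with rfl | rfl <;> rcases hz2 with h | h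
            · exact d13 (congrArg Prod.fst h)
            · exact d14 (congrArg Prod.fst h)
            · exact d23 (congrArg Prod.fst h)
            · exact d24 (congrArg Prod.fst h))]
          rw [pair_union_eq, pair_union_eq,
            quad_perm1 (q1 i, q4 i + ε • v) (q2 i, q3 i + ε • v)
              (q3 i, q2 i + ε • v) (q4 i, q1 i + ε • v)]
          simp only [eA, eB]
      · obtain ⟨-, hMeq⟩ := (hcase i).resolve_left hC
        refine ⟨q3 i, q1 i + ε • v, q2 i, q4 i + ε • v, c4, ?_, ?_, (ncr hC).2, ?_⟩
        · rw [e1, hMid]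
          simp only
          rw [if_neg hC]
          apply Finset.mem_union_left
          rw [Finset.mem_sdiff]
          refine ⟨Finset.mem_union_right _ (Finset.mem_image_of_mem _ (h13 i)), ?_⟩
          simp only [Finset.mem_insert, Finset.mem_singleton]
          push_neg
          exact ⟨fun h => d13 (congrArg Prod.fst h).symm,
                 fun h => d34 (congrArg Prod.fst h)⟩
        · rw [e1, hMid]
          simp only
          rw [if_neg hC]
          apply Finset.mem_union_left
          rw [Finset.mem_sdiff]
          refine ⟨Finset.mem_union_left _ (Finset.mem_image_of_mem _ (h24 i)), ?_⟩
          simp only [Finset.mem_insert, Finset.mem_singleton]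
          push_neg
          exact ⟨fun h => d12 (congrArg Prod.fst h).symm,
                 fun h => d24 (congrArg Prod.fst h)⟩
        · rw [e2, e1, hMeq, cl_update hMatch (h13 i) (h24 i) hsw1 hsw2, hMid]
          simp only
          rw [if_neg hC]
          rw [step2_eq (by
            intro z hz hz2
            simp only [Finset.mem_insert, Finset.mem_singleton] at hz hz2
            rcases hz with rfl | rfl <;> rcases hz2 with h | h
            · exact d13 (congrArg Prod.fst h)
            · exact d12 (congrArg Prod.fst h)
            · exact d34 (congrArg Prod.fst h).symm
            · exact d24 (congrArg Prod.fst h).symm)]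
          simp only [eA, eB]
          rw [pair_union_eq, pair_union_eq,
            quad_perm3 (q1 i, q3 i + ε • v) (q2 i, q4 i + ε • v)
              (q3 i, q1 i + ε • v) (q4 i, q2 i + ε • v),
            quad_perm2 (q1 i, q2 i + ε • v) (q3 i, q4 i + ε • v)
              (q2 i, q1 i + ε • v) (q4 i, q3 i + ε • v)]
end Stmt15

/-- `2 · D_MM(n) ≤ D_RB(2n)`: from a flip sequence of length `m` of perfect
matchings of `n` segments, one obtains `2n` red and `2n` blue points carrying a red-blue
perfect matching of `2n` segments with a flip sequence of length `2m`. -/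
theorem stmt15 (n m : ℕ) (P : Finset Pl) (hP : P.card = 2 * n) (hgp : GenPos (P : Set Pl))
    (M : Fin (m + 1) → Finset Seg)
    (hpm : ∀ i, IsPM P (M i) ∧ (M i).card = n)
    (hflip : ∀ i : Fin m, IsFlip (M i.castSucc) (M i.succ)) :
    ∃ (R B : Finset Pl) (N : Fin (2 * m + 1) → Finset Seg),
      R.card = 2 * n ∧ B.card = 2 * n ∧ Disjoint R B ∧
      (∀ j, IsRBPM R B (N j) ∧ (N j).card = 2 * n) ∧
      ∀ j : Fin (2 * m), IsRBFlip (N j.castSucc) (N j.succ) := by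
  exact Stmt15.stmt15' n m P hP hgp M hpm hflip
end
end
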